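/- arXiv:1406.6440 — 6 statements merged into one kernel-verified Lean document; each statement's English description precedes it below -/
import Mathlib

section
/- The normalized volume of the hypersimplex Δ_{k,n}, multiplied by n!, equals the Eulerian number A(n,k), the number of permutations of {1,...,n} with exactly k-1 descents. -/
open scoped Pointwise
open MeasureTheory Nat

namespace MixedEulerian

/-- A division of a finite set `S` into an ordered sequence of blocks,
with all elements of earlier blocks strictly smaller than those of later blocks. -/
def IsDivision (C : List (Finset ℕ)) (S : Finset ℕ) : Prop :=
  (∀ s ∈ S, ∃ i, i < C.length ∧ s ∈ C.getD i ∅) ∧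
  (∀ i, i < C.length → C.getD i ∅ ⊆ S) ∧
  (∀ i j, i < j → j < C.length →
    ∀ s ∈ C.getD i ∅, ∀ t ∈ C.getD j ∅, s < t)

/-- Type A admissibility: `s ∈ C_i` is admissible iff `s = min C₁`, `s = max C_n`,
or `i` is strictly between the first and the last index. (Indices are 0-based.) -/
def AdmissibleA (C : List (Finset ℕ)) (s : ℕ) : Prop :=
  ∃ i, i < C.length ∧ s ∈ C.getD i ∅ ∧
    ((i = 0 ∧ ∀ t ∈ C.getD 0 ∅, s ≤ t) ∨
     (i = C.length - 1 ∧ ∀ t ∈ C.getD i ∅, t ≤ s) ∨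
     (0 < i ∧ i + 1 < C.length))

/-- Type A deletion of `s` from the division `C`. -/
def deleteA (C : List (Finset ℕ)) (s : ℕ) : List (Finset ℕ) :=
  let i := C.findIdx (fun b => decide (s ∈ b))
  let B := C.getD i ∅
  let lo := B.filter (fun t => t < s)
  let hi := B.filter (fun t => s < t)
  if C.length ≤ 1 then []
  else if i = 0 then (hi ∪ C.getD 1 ∅) :: C.drop 2
  else if i = C.length - 1 then C.take (i - 1) ++ [C.getD (i - 1) ∅ ∪ lo]
  else C.take (i - 1) ++ [C.getD (i - 1) ∅ ∪ lo, hi ∪ C.getD (i + 1) ∅] ++ C.drop (i + 2)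

/-- `w` is a (type A) `C`-permutation: each entry is admissible in the division
obtained by deleting the previous entries, and all elements get deleted. -/
def IsCPermA : List (Finset ℕ) → List ℕ → Prop
  | C, [] => ∀ B ∈ C, B = ∅
  | C, s :: w => AdmissibleA C s ∧ IsCPermA (deleteA C s) w

/-- Type B admissibility: `s ∈ C_i` is admissible iff `s = min C₁` or `i ≠ 0`. -/
def AdmissibleB (C : List (Finset ℕ)) (s : ℕ) : Prop :=
  ∃ i, i < C.length ∧ s ∈ C.getD i ∅ ∧
    ((i = 0 ∧ ∀ t ∈ C.getD 0 ∅, s ≤ t) ∨ i ≠ 0)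

/-- Type B deletion of `s` from the division `C`. -/
def deleteB (C : List (Finset ℕ)) (s : ℕ) : List (Finset ℕ) :=
  let i := C.findIdx (fun b => decide (s ∈ b))
  if i = C.length - 1 ∧ 0 < i then
    C.take (i - 1) ++ [C.getD (i - 1) ∅ ∪ ((C.getD i ∅).erase s)]
  else deleteA C s

/-- `w` is a type B `C`-permutation. -/
def IsCPermB : List (Finset ℕ) → List ℕ → Prop
  | C, [] => ∀ B ∈ C, B = ∅
  | C, s :: w => AdmissibleB C s ∧ IsCPermB (deleteB C s) w

/-- A sequence of elements that can be successively (type A) deleted from `C`. -/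
def AdmissibleSeqA : List (Finset ℕ) → List ℕ → Prop
  | _, [] => True
  | C, s :: w => AdmissibleA C s ∧ AdmissibleSeqA (deleteA C s) w

/-- Number of descents of a list: the number of adjacent pairs that decrease. -/
def listDescents {α : Type*} [LinearOrder α] (l : List α) : ℕ :=
  (l.zip l.tail).countP (fun p => decide (p.2 < p.1))

/-- Eulerian number `A(n,k)`: permutations of `{1,…,n}` with exactly `k-1` descents. -/
def eulerianA (n k : ℕ) : ℕ :=
  (List.range' 1 n).permutations.countP (fun l => decide (listDescents l = k - 1))

/-- `A(m,t;r)`: permutations of `{1,…,m+1}` with `t-1` descents and first entry `r+1`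
(declared to be `0` when `t = 0`; it vanishes automatically when `t > m+1`). -/
def eulerianFirst (m t r : ℕ) : ℕ :=
  if t = 0 then 0 else
    (List.range' 1 (m + 1)).permutations.countP
      (fun l => decide (listDescents l = t - 1 ∧ l.headI = r + 1))

/-- The index of `t` in the `C`-permutation `w`: the (1-based) position of the block
containing `t` just before `t` is deleted. -/
def indexFn (C : List (Finset ℕ)) : List ℕ → ℕ → ℕ
  | [], _ => 0
  | s :: w, t =>
      if t = s then C.findIdx (fun b => decide (t ∈ b)) + 1
      else indexFn (deleteA C s) w t

/-- An index function of `C`: any function sending each element of `C_i` into `{1,…,i}`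
(1-based). -/
def IsIndexFn (C : List (Finset ℕ)) (I : ℕ → ℕ) : Prop :=
  ∀ i, i < C.length → ∀ s ∈ C.getD i ∅, 1 ≤ I s ∧ I s ≤ i + 1

/-- `C` is superdiagonal: `|C₁| + ⋯ + |C_i| ≥ i` for all `i`. -/
def Superdiagonal (C : List (Finset ℕ)) : Prop :=
  ∀ i, i ≤ C.length → i ≤ ∑ j ∈ Finset.range i, (C.getD j ∅).card

/-- `C` is subdiagonal: `|C_n| + ⋯ + |C_{n-i+1}| ≥ i` for all `i`. -/
def Subdiagonal (C : List (Finset ℕ)) : Prop :=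
  ∀ i, i ≤ C.length → i ≤ ∑ j ∈ Finset.range i, (C.getD (C.length - 1 - j) ∅).card

/-- The canonical division of `{1,…,c.sum}` with block sizes given by `c`. -/
def divisionOf (c : List ℕ) : List (Finset ℕ) :=
  (List.range c.length).map (fun i => Finset.Ioc ((c.take i).sum) ((c.take (i + 1)).sum))

/-- The number of `C`-permutations for a division with block sizes `c`. -/
noncomputable def NPerm (c : List ℕ) : ℕ :=
  Nat.card {w : List ℕ // IsCPermA (divisionOf c) w}

/-- The division of `{1,…,n}` with all elements in (1-based) position `k`. -/
def midDivision (n k : ℕ) : List (Finset ℕ) :=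
  List.replicate (k - 1) ∅ ++ [Finset.Icc 1 n] ++ List.replicate (n - k) ∅

/-- The hypersimplex `Δ_{k,n} ⊆ ℝ^{n+1}`. -/
def hypersimplex (n k : ℕ) : Set (Fin (n + 1) → ℝ) :=
  convexHull ℝ {x | ∃ T : Finset (Fin (n + 1)), T.card = k ∧
    x = fun i => if i ∈ T then (1 : ℝ) else 0}

/-- The permutohedron `P(y₁,…,y_m) ⊆ ℝ^m`. -/
def permutohedron {m : ℕ} (y : Fin m → ℝ) : Set (Fin m → ℝ) :=
  convexHull ℝ {x | ∃ w : Equiv.Perm (Fin m), x = y ∘ w}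

/-- The polytope `Γ_{k,n} ⊆ ℝ^n`, the convex hull of all `±e_{i₁} ± ⋯ ± e_{i_k}`. -/
def gammaPolytope (n k : ℕ) : Set (Fin n → ℝ) :=
  convexHull ℝ {x | ∃ T : Finset (Fin n), T.card = k ∧ ∃ ε : Fin n → ℝ,
    (∀ i, ε i = 1 ∨ ε i = -1) ∧ x = fun i => if i ∈ T then ε i else 0}

/-- The signed permutohedron `SP(y₁,…,y_n) ⊆ ℝ^n`. -/
def signedPermutohedron {m : ℕ} (y : Fin m → ℝ) : Set (Fin m → ℝ) :=
  convexHull ℝ {x | ∃ w : Equiv.Perm (Fin m), ∃ ε : Fin m → ℝ,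
    (∀ i, ε i = 1 ∨ ε i = -1) ∧ x = fun i => ε i * y (w i)}



/-! ### Auxiliary development for `hypersimplex_volume` -/

section Aux

open Finset

/-- Extension of `y : Fin n → ℝ` to `ℕ`, with value 0 out of range. -/
def Wf (n : ℕ) (y : Fin n → ℝ) : ℕ → ℝ
  | 0 => 0
  | (m+1) => if h : m < n then y ⟨m, h⟩ else 0

/-- The Stanley map sending `y` to the vector of fractional parts of consecutive
differences. -/
noncomputable def Tmap (n : ℕ) (y : Fin n → ℝ) : Fin n → ℝ :=
  fun i => Int.fract (Wf n y ((i : ℕ) + 1) - Wf n y (i : ℕ))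

/-- The (open) order region associated to a list `l` (a permutation of `1..n`):
`y` lies in the open unit cube and the coordinates of `y` are ordered like `l`. -/
def region (n : ℕ) (l : List ℕ) : Set (Fin n → ℝ) :=
  {y | (∀ i, y i ∈ Set.Ioo (0:ℝ) 1) ∧
    ∀ p q : Fin n, l.getD (p : ℕ) 0 < l.getD (q : ℕ) 0 → y p < y q}

/-- The 0/1 descent vector of a list. -/
def dvec (n : ℕ) (l : List ℕ) : Fin n → ℝ :=
  fun i => if l.getD (i : ℕ) 0 < l.getD ((i : ℕ) - 1) 0 then 1 else 0

lemma listDescents_cons_cons (a b : ℕ) (t : List ℕ) :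
    listDescents (a :: b :: t) = (if b < a then 1 else 0) + listDescents (b :: t) := by
  have hz : (a :: b :: t).zip (b :: t) = (a, b) :: ((b :: t).zip t) := rfl
  simp only [listDescents, List.tail_cons, hz, List.countP_cons]
  by_cases h : b < a <;> simp [h, Nat.add_comm]

lemma listDescents_eq_sum (l : List ℕ) :
    listDescents l = ∑ p ∈ Finset.range (l.length - 1),
      (if l.getD (p+1) 0 < l.getD p 0 then 1 else 0) := by
  induction l with
  | nil => simp [listDescents]
  | cons a t ih =>
    rcases t with _ | ⟨b, t'⟩
    · simp [listDescents]
    · rw [listDescents_cons_cons, ih]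
      have hlen : (a :: b :: t').length - 1 = (b :: t').length - 1 + 1 := by
        simp
      rw [hlen, Finset.sum_range_succ']
      simp only [List.getD_cons_succ, List.getD_cons_zero]
      omega

lemma countP_lt_range' (n a : ℕ) (h1 : 1 ≤ a) (h2 : a ≤ n + 1) :
    (List.range' 1 n).countP (fun x => decide (x < a)) = a - 1 := by
  induction n with
  | zero => interval_cases a <;> simp
  | succ m ih =>
    rw [List.range'_concat, List.countP_append]
    rcases Nat.lt_or_ge a (m + 2) with h | h
    · have : ¬ (1 + 1 * m < a) := by omega
      simp only [List.countP_cons, List.countP_nil, decide_eq_true_eq, this]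
      rw [ih (by omega)]
      simp
    · have ha : a = m + 2 := by omega
      subst ha
      have hall : ∀ x ∈ List.range' 1 m, (fun x => decide (x < m + 2)) x = true := by
        intro x hx
        rw [List.mem_range'_1] at hx
        simp only [decide_eq_true_eq]; omega
      have hc : (List.range' 1 m).countP (fun x => decide (x < m + 2)) = m := by
        have := List.countP_eq_length.2 hall
        simpa using this
      simp only [List.countP_cons, List.countP_nil, decide_eq_true_eq, hc]
      have hlt : 1 + 1 * m < m + 2 := by omega
      simp only [if_pos hlt]
      omega

lemma countP_ofFn {α : Type*} {n : ℕ} (f : Fin n → α) (p : α → Bool) :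
    (List.ofFn f).countP p = (Finset.univ.filter (fun i => p (f i) = true)).card := by
  classical
  rw [List.ofFn_eq_map, List.countP_eq_length_filter, List.filter_map, List.length_map]
  rw [← List.toFinset_card_of_nodup ((List.nodup_finRange n).filter _)]
  congr 1
  rw [List.toFinset_filter, List.toFinset_finRange]
  rfl

lemma ofFn_getD {n : ℕ} (l : List ℕ) (hlen : l.length = n) :
    List.ofFn (fun q : Fin n => l.getD (q : ℕ) 0) = l := by
  apply List.ext_getElem (by simp [hlen])
  intro m h1 h2
  rw [List.getElem_ofFn]
  exact List.getD_eq_getElem l 0 h2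

lemma countP_eq_card_filter_fin {n : ℕ} (l : List ℕ) (hlen : l.length = n) (p : ℕ → Bool) :
    l.countP p = (Finset.univ.filter (fun q : Fin n => p (l.getD (q : ℕ) 0) = true)).card := by
  conv_lhs => rw [← ofFn_getD l hlen]
  exact countP_ofFn _ p

end Aux

section Aux2

open Finset

variable {n : ℕ} {l l' : List ℕ} {y : Fin n → ℝ}

lemma perm_length (hl : l.Perm (List.range' 1 n)) : l.length = n := by
  simpa using hl.length_eq

lemma perm_nodup (hl : l.Perm (List.range' 1 n)) : l.Nodup :=
  hl.symm.nodup (List.nodup_range' (s := 1) (n := n))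

lemma perm_getD_mem (hl : l.Perm (List.range' 1 n)) (p : Fin n) :
    1 ≤ l.getD (p : ℕ) 0 ∧ l.getD (p : ℕ) 0 ≤ n := by
  have hlen := perm_length hl
  have hp : (p : ℕ) < l.length := by rw [hlen]; exact p.isLt
  rw [List.getD_eq_getElem l 0 hp]
  have : l[(p : ℕ)] ∈ l := List.getElem_mem hp
  rw [hl.mem_iff, List.mem_range'_1] at this
  omega

lemma perm_getD_inj (hl : l.Perm (List.range' 1 n)) {p q : Fin n}
    (h : l.getD (p : ℕ) 0 = l.getD (q : ℕ) 0) : p = q := by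
  have hlen := perm_length hl
  have hp : (p : ℕ) < l.length := by rw [hlen]; exact p.isLt
  have hq : (q : ℕ) < l.length := by rw [hlen]; exact q.isLt
  rw [List.getD_eq_getElem l 0 hp, List.getD_eq_getElem l 0 hq] at h
  exact Fin.ext (((perm_nodup hl).getElem_inj_iff).1 h)

/-- In a permutation of `1..n`, every value equals one plus the number of
positions with smaller values. -/
lemma getD_eq_rank (hl : l.Perm (List.range' 1 n)) (p : Fin n) :
    l.getD (p : ℕ) 0 = 1 +
      (Finset.univ.filter (fun q : Fin n => l.getD (q : ℕ) 0 < l.getD (p : ℕ) 0)).card := by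
  classical
  have hlen := perm_length hl
  set a := l.getD (p : ℕ) 0 with ha
  obtain ⟨ha1, ha2⟩ := perm_getD_mem hl p
  have hcount : l.countP (fun x => decide (x < a)) = a - 1 := by
    rw [hl.countP_eq]
    exact countP_lt_range' n a ha1 (by omega)
  have hcard := countP_eq_card_filter_fin l hlen (fun x => decide (x < a))
  rw [hcount] at hcard
  have : (Finset.univ.filter (fun q : Fin n => l.getD (q : ℕ) 0 < a)).card = a - 1 := by
    rw [← hcard.symm]
    congr 1
    apply Finset.filter_congr
    intro q _
    simp
  rw [this]
  omega

lemma region_lt_iff (hl : l.Perm (List.range' 1 n)) (hy : y ∈ region n l) (p q : Fin n) :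
    y p < y q ↔ l.getD (p : ℕ) 0 < l.getD (q : ℕ) 0 := by
  constructor
  · intro h
    rcases lt_trichotomy (l.getD (p : ℕ) 0) (l.getD (q : ℕ) 0) with h' | h' | h'
    · exact h'
    · exact absurd (perm_getD_inj hl h') (by rintro rfl; exact lt_irrefl _ h)
    · exact absurd (hy.2 q p h') (by exact not_lt_of_gt h)
  · exact hy.2 p q

lemma region_disjoint (hl : l.Perm (List.range' 1 n)) (hl' : l'.Perm (List.range' 1 n))
    (hne : l ≠ l') : Disjoint (region n l) (region n l') := by
  classical
  rw [Set.disjoint_left]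
  intro y hy hy'
  apply hne
  apply List.ext_getElem (by rw [perm_length hl, perm_length hl'])
  intro m hm1 hm2
  have hmn : m < n := by rwa [perm_length hl] at hm1
  set p : Fin n := ⟨m, hmn⟩
  have e1 : l[m] = l.getD (p : ℕ) 0 := (List.getD_eq_getElem l 0 hm1).symm
  have e2 : l'[m] = l'.getD (p : ℕ) 0 := (List.getD_eq_getElem l' 0 hm2).symm
  rw [e1, e2, getD_eq_rank hl p, getD_eq_rank hl' p]
  congr 2
  apply Finset.filter_congr
  intro q _
  exact (region_lt_iff hl hy q p).symm.trans (region_lt_iff hl' hy' q p)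

/-- Construction of the order pattern of an injective point of the cube. -/
lemma exists_region (hy1 : ∀ i, y i ∈ Set.Ioo (0:ℝ) 1)
    (hy2 : ∀ p q : Fin n, p ≠ q → y p ≠ y q) :
    ∃ l : List ℕ, l.Perm (List.range' 1 n) ∧ y ∈ region n l := by
  classical
  set rk : Fin n → ℕ := fun p => 1 + (Finset.univ.filter (fun q : Fin n => y q < y p)).card
    with hrk
  have hmono : ∀ p q : Fin n, y p < y q → rk p < rk q := by
    intro p q h
    have hss : (Finset.univ.filter (fun r : Fin n => y r < y p)) ⊂
        (Finset.univ.filter (fun r : Fin n => y r < y q)) := by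
      apply Finset.ssubset_iff_of_subset ?_ |>.2
      · exact ⟨p, by simp [h], by simp⟩
      · intro r hr
        simp only [Finset.mem_filter, Finset.mem_univ, true_and] at hr ⊢
        exact hr.trans h
    have := Finset.card_lt_card hss
    simp only [hrk]
    omega
  have hinj : Function.Injective rk := by
    intro p q h
    by_contra hne
    rcases lt_trichotomy (y p) (y q) with h' | h' | h'
    · exact absurd h (by have := hmono p q h'; omega)
    · exact hy2 p q hne h'
    · exact absurd h (by have := hmono q p h'; omega)
  refine ⟨List.ofFn rk, ?_, hy1, ?_⟩
  · apply List.Subperm.perm_of_length_le ?_ (by simp)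
    apply List.Nodup.subperm (List.nodup_ofFn.2 hinj)
    intro a hamem
    rw [List.mem_ofFn] at hamem
    obtain ⟨p, rfl⟩ := hamem
    rw [List.mem_range'_1]
    constructor
    · simp [hrk]
    · have hsub : (Finset.univ.filter (fun q : Fin n => y q < y p)) ⊆
          Finset.univ.erase p := by
        intro r hr
        simp only [Finset.mem_filter, Finset.mem_univ, true_and] at hr
        simp only [Finset.mem_erase, Finset.mem_univ, and_true]
        rintro rfl; exact lt_irrefl _ hr
      have hcard := Finset.card_le_card hsub
      rw [Finset.card_erase_of_mem (Finset.mem_univ p), Finset.card_univ, Fintype.card_fin]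
        at hcard
      have hn : 0 < n := p.pos
      simp only [hrk]
      omega
  · intro p q h
    have hp : ((p : ℕ)) < (List.ofFn rk).length := by simp [p.isLt]
    have hq : ((q : ℕ)) < (List.ofFn rk).length := by simp [q.isLt]
    rw [List.getD_eq_getElem _ 0 hp, List.getD_eq_getElem _ 0 hq] at h
    simp only [List.getElem_ofFn, Fin.eta] at h
    rcases lt_trichotomy (y p) (y q) with h' | h' | h'
    · exact h'
    · rcases eq_or_ne p q with rfl | hne
      · exact absurd h (lt_irrefl _)
      · exact absurd h' (hy2 p q hne)
    · exact absurd h (by have := hmono q p h'; omega)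

end Aux2

section Aux3

open Finset

variable {n : ℕ} {l : List ℕ} {y : Fin n → ℝ}

lemma fract_add_fract (b c : ℝ) : Int.fract (b + Int.fract c) = Int.fract (b + c) := by
  have h : b + Int.fract c = (b + c) - ((⌊c⌋ : ℤ) : ℝ) := by
    rw [← Int.self_sub_floor c]; push_cast; ring
  rw [h, Int.fract_sub_intCast]

lemma fract_sub_fract (a b : ℝ) : Int.fract (Int.fract a - Int.fract b) = Int.fract (a - b) := by
  have h : Int.fract a - Int.fract b = (a - b) - (((⌊a⌋ - ⌊b⌋ : ℤ)) : ℝ) := by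
    rw [← Int.self_sub_floor a, ← Int.self_sub_floor b]; push_cast; ring
  rw [h, Int.fract_sub_intCast]

lemma Wf_succ (y : Fin n → ℝ) {m : ℕ} (h : m < n) : Wf n y (m + 1) = y ⟨m, h⟩ := by
  simp [Wf, h]

lemma Wf_zero (y : Fin n → ℝ) : Wf n y 0 = 0 := rfl

/-- On the order region of `l`, the Stanley map is the difference map plus the
descent vector of `l`. -/
lemma tmap_eq_on_region (hl : l.Perm (List.range' 1 n)) (hy : y ∈ region n l) (i : Fin n) :
    Tmap n y i = (Wf n y ((i : ℕ) + 1) - Wf n y (i : ℕ)) + dvec n l i := by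
  have hcube := hy.1
  rcases Nat.eq_zero_or_eq_succ_pred (i : ℕ) with h0 | hs
  · have hi : (i : ℕ) = 0 := h0
    rw [Tmap, dvec, hi]
    rw [Wf_succ y (by omega : 0 < n), Wf_zero]
    have h01 := hcube ⟨0, by omega⟩
    rw [if_neg (by simp), Int.fract_eq_self.2 ⟨by linarith [h01.1], by linarith [h01.2]⟩]
    ring
  · set m := (i : ℕ) - 1 with hm
    have hieq : (i : ℕ) = m + 1 := hs
    have hmn : m < n := by have := i.isLt; omega
    have hm1n : m + 1 < n := by have := i.isLt; omega
    rw [Tmap, dvec, hieq]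
    rw [Wf_succ y hm1n, Wf_succ y hmn]
    have hy1 := hcube ⟨m + 1, hm1n⟩
    have hy0 := hcube ⟨m, hmn⟩
    have hne : l.getD (m + 1) 0 ≠ l.getD m 0 := by
      intro h
      have := perm_getD_inj hl (p := ⟨m + 1, hm1n⟩) (q := ⟨m, hmn⟩) h
      simp [Fin.ext_iff] at this
    have hiff := region_lt_iff hl hy ⟨m + 1, hm1n⟩ ⟨m, hmn⟩
    by_cases hlt : l.getD (m + 1) 0 < l.getD m 0
    · have hylt : y ⟨m + 1, hm1n⟩ < y ⟨m, hmn⟩ := hiff.2 hlt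
      rw [if_pos (by simpa using hlt)]
      have : y ⟨m + 1, hm1n⟩ - y ⟨m, hmn⟩ + 1 ∈ Set.Ico (0:ℝ) 1 := by
        constructor <;> [linarith [hy1.1, hy0.2]; linarith [hylt]]
      rw [show y ⟨m + 1, hm1n⟩ - y ⟨m, hmn⟩ = (y ⟨m + 1, hm1n⟩ - y ⟨m, hmn⟩ + 1) - ((1:ℤ):ℝ)
        by push_cast; ring, Int.fract_sub_intCast, Int.fract_eq_self.2 ⟨this.1, this.2⟩]
      push_cast; ring
    · have hlt' : l.getD m 0 < l.getD (m + 1) 0 := by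
        rcases lt_trichotomy (l.getD (m+1) 0) (l.getD m 0) with h | h | h
        · exact absurd h hlt
        · exact absurd h hne
        · exact h
      have hylt : y ⟨m, hmn⟩ < y ⟨m + 1, hm1n⟩ :=
        (region_lt_iff hl hy ⟨m, hmn⟩ ⟨m + 1, hm1n⟩).2 hlt'
      rw [if_neg (by simpa using hlt)]
      rw [Int.fract_eq_self.2 ⟨by linarith, by linarith [hy1.2, hy0.1]⟩]
      ring

/-- Sum of the descent vector equals the number of descents. -/
lemma sum_dvec (hlen : l.length = n) :
    ∑ i : Fin n, dvec n l i = (listDescents l : ℝ) := by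
  have h1 : ∑ i : Fin n, dvec n l i
      = ∑ m ∈ Finset.range n, (if l.getD m 0 < l.getD (m - 1) 0 then (1:ℝ) else 0) :=
    Fin.sum_univ_eq_sum_range (fun m => if l.getD m 0 < l.getD (m - 1) 0 then (1:ℝ) else 0) n
  subst hlen
  rw [h1, listDescents_eq_sum]
  rcases l.length.eq_zero_or_pos with h0 | hn
  · rw [h0]; simp
  · obtain ⟨m, hm⟩ : ∃ m, l.length = m + 1 := ⟨l.length - 1, by omega⟩
    rw [hm, Finset.sum_range_succ']
    have hz : (if l.getD 0 0 < l.getD (0 - 1) 0 then (1:ℝ) else 0) = 0 := by simp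
    rw [hz, add_zero, Nat.cast_sum]
    have hmm : m + 1 - 1 = m := rfl
    rw [hmm]
    apply Finset.sum_congr rfl
    intro p hp
    have : p + 1 - 1 = p := rfl
    rw [this]
    split <;> simp

/-- Sum of the coordinates of the image under the Stanley map. -/
lemma sum_tmap (hl : l.Perm (List.range' 1 n)) (hy : y ∈ region n l) :
    ∑ i : Fin n, Tmap n y i = Wf n y n + (listDescents l : ℝ) := by
  have : ∑ i : Fin n, Tmap n y i
      = ∑ i : Fin n, ((Wf n y ((i : ℕ) + 1) - Wf n y (i : ℕ)) + dvec n l i) :=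
    Finset.sum_congr rfl (fun i _ => tmap_eq_on_region hl hy i)
  rw [this, Finset.sum_add_distrib, sum_dvec (perm_length hl)]
  congr 1
  rw [Fin.sum_univ_eq_sum_range (fun m => Wf n y (m + 1) - Wf n y m) n,
    Finset.sum_range_sub (Wf n y) n, Wf_zero, sub_zero]

/-- The Stanley map is injective on the half-open cube. -/
lemma tmap_injOn :
    Set.InjOn (Tmap n) {y : Fin n → ℝ | ∀ i, 0 ≤ y i ∧ y i < 1} := by
  intro y hy y' hy' h
  have key : ∀ m, m ≤ n → Wf n y m = Wf n y' m := by
    intro m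
    induction m with
    | zero => intro _; rfl
    | succ m ih =>
      intro hm1
      have hmn : m < n := by omega
      have e1 : Wf n y (m + 1) = Int.fract (Wf n y m + Tmap n y ⟨m, hmn⟩) := by
        rw [Tmap, fract_add_fract]
        have := hy ⟨m, hmn⟩
        rw [show (((⟨m, hmn⟩ : Fin n) : ℕ)) = m from rfl]
        rw [show Wf n y m + (Wf n y (m + 1) - Wf n y m) = Wf n y (m+1) by ring]
        rw [Int.fract_eq_self.2 (by rw [Wf_succ y hmn]; exact this)]
      have e2 : Wf n y' (m + 1) = Int.fract (Wf n y' m + Tmap n y' ⟨m, hmn⟩) := by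
        rw [Tmap, fract_add_fract]
        have := hy' ⟨m, hmn⟩
        rw [show (((⟨m, hmn⟩ : Fin n) : ℕ)) = m from rfl]
        rw [show Wf n y' m + (Wf n y' (m + 1) - Wf n y' m) = Wf n y' (m+1) by ring]
        rw [Int.fract_eq_self.2 (by rw [Wf_succ y' hmn]; exact this)]
      rw [e1, e2, ih (by omega), h]
  funext i
  have := key ((i : ℕ) + 1) i.isLt
  rwa [Wf_succ y i.isLt, Wf_succ y' i.isLt] at this

end Aux3

section Aux4

open Finset MeasureTheory

variable {n : ℕ} {l l' : List ℕ}

/-- The linear functional `x ↦ ∑ c i * x i`. -/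
def cfunc (n : ℕ) (c : Fin n → ℝ) : (Fin n → ℝ) →ₗ[ℝ] ℝ where
  toFun x := ∑ i, c i * x i
  map_add' x y := by simp [mul_add, Finset.sum_add_distrib]
  map_smul' r x := by
    simp only [Pi.smul_apply, smul_eq_mul, RingHom.id_apply, Finset.mul_sum]
    exact Finset.sum_congr rfl fun i _ => by ring

lemma null_hyperplane (c : Fin n → ℝ) (hc : c ≠ 0) (r : ℝ) :
    volume {x : Fin n → ℝ | ∑ i, c i * x i = r} = 0 := by
  classical
  obtain ⟨i0, hi0⟩ : ∃ i, c i ≠ 0 := by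
    by_contra h
    push_neg at h
    exact hc (funext h)
  set A : AffineSubspace ℝ (Fin n → ℝ) :=
    { carrier := {x | ∑ i, c i * x i = r}
      smul_vsub_vadd_mem' := by
        intro t p1 p2 p3 h1 h2 h3
        simp only [Set.mem_setOf_eq] at h1 h2 h3 ⊢
        have : ∀ x : Fin n → ℝ, ∑ i, c i * x i = cfunc n c x := fun _ => rfl
        simp only [this] at h1 h2 h3 ⊢
        have : (t • (p1 -ᵥ p2) +ᵥ p3) = t • (p1 - p2) + p3 := rfl
        rw [this, _root_.map_add, _root_.map_smul, map_sub, h1, h2, h3]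
        simp }
  have hne : A ≠ ⊤ := by
    intro htop
    have hmem : (fun j => if j = i0 then (r + 1) / c i0 else 0) ∈ A := by
      rw [htop]; exact AffineSubspace.mem_top ℝ _ _
    have : ∑ i, c i * (if i = i0 then (r + 1) / c i0 else 0) = r := hmem
    rw [Finset.sum_eq_single i0 (by intro b _ hb; simp [hb]) (by simp)] at this
    rw [if_pos rfl, mul_div_cancel₀ _ hi0] at this
    linarith
  exact MeasureTheory.Measure.addHaar_affineSubspace volume A hne

lemma null_eq_coords (p q : Fin n) (hpq : p ≠ q) :
    volume {x : Fin n → ℝ | x p = x q} = 0 := by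
  classical
  have h : {x : Fin n → ℝ | x p = x q}
      = {x : Fin n → ℝ |
          ∑ i, (fun i => (if i = p then (1:ℝ) else 0) - if i = q then 1 else 0) i * x i = 0} := by
    ext x
    simp only [Set.mem_setOf_eq, sub_mul, ite_mul, one_mul, zero_mul]
    rw [Finset.sum_sub_distrib, Finset.sum_ite_eq' Finset.univ p (fun i => x i),
      Finset.sum_ite_eq' Finset.univ q (fun i => x i)]
    simp only [Finset.mem_univ, if_pos]
    rw [sub_eq_zero]
  rw [h]
  apply null_hyperplane
  intro hzero
  have := congrFun hzero p
  simp [hpq] at this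

lemma null_finset_sum (s : Finset (Fin n)) (hs : s.Nonempty) (m : ℝ) :
    volume {x : Fin n → ℝ | ∑ j ∈ s, x j = m} = 0 := by
  classical
  have h : {x : Fin n → ℝ | ∑ j ∈ s, x j = m}
      = {x : Fin n → ℝ | ∑ i, (fun i => if i ∈ s then (1:ℝ) else 0) i * x i = m} := by
    ext x
    simp only [Set.mem_setOf_eq, ite_mul, one_mul, zero_mul]
    rw [Finset.sum_ite_mem, Finset.univ_inter]
  rw [h]
  apply null_hyperplane
  intro hzero
  obtain ⟨j, hj⟩ := hs
  have := congrFun hzero j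
  simp [hj] at this

/-- The global null set of points with some subset-sum integral. -/
def Nset (n : ℕ) : Set (Fin n → ℝ) :=
  ⋃ (s : Finset (Fin n)), ⋃ (m : ℤ), {x | s.Nonempty ∧ ∑ j ∈ s, x j = (m : ℝ)}

lemma null_Nset : volume (Nset n) = 0 := by
  apply measure_iUnion_null
  intro s
  apply measure_iUnion_null
  intro m
  rcases s.eq_empty_or_nonempty with rfl | hs
  · simp
  · have h : {x : Fin n → ℝ | s.Nonempty ∧ ∑ j ∈ s, x j = (m : ℝ)}
        ⊆ {x : Fin n → ℝ | ∑ j ∈ s, x j = (m : ℝ)} := fun x hx => hx.2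
    exact measure_mono_null h (null_finset_sum s hs m)

/-- The difference linear map. -/
def Lmap (n : ℕ) : (Fin n → ℝ) →ₗ[ℝ] (Fin n → ℝ) where
  toFun y := fun i => Wf n y ((i : ℕ) + 1) - Wf n y (i : ℕ)
  map_add' x y := by
    funext i
    have h : ∀ m, Wf n (x + y) m = Wf n x m + Wf n y m := by
      intro m
      rcases m with _ | m
      · simp [Wf_zero]
      · by_cases h : m < n
        · rw [Wf_succ _ h, Wf_succ _ h, Wf_succ _ h]; rfl
        · simp [Wf, h]
    simp only [Pi.add_apply, h]; ring
  map_smul' r x := by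
    funext i
    have h : ∀ m, Wf n (r • x) m = r * Wf n x m := by
      intro m
      rcases m with _ | m
      · simp [Wf_zero]
      · by_cases h : m < n
        · rw [Wf_succ _ h, Wf_succ _ h]; rfl
        · simp [Wf, h]
    simp only [h, RingHom.id_apply, Pi.smul_apply, smul_eq_mul]; ring

lemma Wf_single (j : Fin n) (m : ℕ) (hm : m < n) :
    Wf n (Pi.single j (1:ℝ)) (m + 1) = if m = (j : ℕ) then 1 else 0 := by
  rw [Wf_succ _ hm, Pi.single_apply]
  congr 1
  simp [Fin.ext_iff]

lemma toMatrix_Lmap (i j : Fin n) :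
    (LinearMap.toMatrix (Pi.basisFun ℝ (Fin n)) (Pi.basisFun ℝ (Fin n)) (Lmap n)) i j
      = (if (i : ℕ) = (j : ℕ) then 1 else 0) - (if (i : ℕ) = (j : ℕ) + 1 then 1 else 0) := by
  rw [LinearMap.toMatrix_apply, Pi.basisFun_repr, Pi.basisFun_apply]
  show Wf n (Pi.single j (1:ℝ)) ((i : ℕ) + 1) - Wf n (Pi.single j (1:ℝ)) (i : ℕ) = _
  rw [Wf_single j (i : ℕ) i.isLt]
  congr 1
  rcases Nat.eq_zero_or_eq_succ_pred (i : ℕ) with h0 | hs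
  · rw [h0, Wf_zero, if_neg (by omega)]
  · set m := (i : ℕ) - 1 with hmdef
    have hieq : (i : ℕ) = m + 1 := hs
    have hmn : m < n := by have := i.isLt; omega
    rw [hieq, Wf_single j m hmn]
    by_cases h : m = (j : ℕ)
    · rw [if_pos h, if_pos (by omega)]
    · rw [if_neg h, if_neg (by omega)]

lemma det_Lmap : LinearMap.det (Lmap n) = 1 := by
  classical
  rw [← LinearMap.det_toMatrix (Pi.basisFun ℝ (Fin n))]
  have htri : (LinearMap.toMatrix (Pi.basisFun ℝ (Fin n)) (Pi.basisFun ℝ (Fin n))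
      (Lmap n)).BlockTriangular OrderDual.toDual := by
    intro i j hij
    have hij' : (i : ℕ) < (j : ℕ) := hij
    rw [toMatrix_Lmap, if_neg (by omega), if_neg (by omega)]
    ring
  rw [Matrix.det_of_lowerTriangular _ htri]
  apply Finset.prod_eq_one
  intro i _
  rw [toMatrix_Lmap, if_pos rfl, if_neg (by omega)]
  ring

end Aux4

section Aux5

open Finset MeasureTheory

variable {n : ℕ} {l l' : List ℕ}

lemma measurableSet_region : MeasurableSet (region n l) := by
  have h : region n l = (⋂ i : Fin n, {y : Fin n → ℝ | y i ∈ Set.Ioo (0:ℝ) 1}) ∩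
      ⋂ p : Fin n, ⋂ q : Fin n,
        {y : Fin n → ℝ | l.getD (p : ℕ) 0 < l.getD (q : ℕ) 0 → y p < y q} := by
    ext y
    simp only [region, Set.mem_setOf_eq, Set.mem_inter_iff, Set.mem_iInter]
  rw [h]
  apply MeasurableSet.inter
  · exact MeasurableSet.iInter fun i =>
      (measurable_pi_apply i) measurableSet_Ioo
  · apply MeasurableSet.iInter
    intro p
    apply MeasurableSet.iInter
    intro q
    by_cases hc : l.getD (p : ℕ) 0 < l.getD (q : ℕ) 0
    · have heq : {y : Fin n → ℝ | l.getD (p : ℕ) 0 < l.getD (q : ℕ) 0 → y p < y q}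
          = {y : Fin n → ℝ | y p < y q} := by
        ext y
        exact ⟨fun h => h hc, fun h _ => h⟩
      rw [heq]
      exact measurableSet_lt (measurable_pi_apply p) (measurable_pi_apply q)
    · have heq : {y : Fin n → ℝ | l.getD (p : ℕ) 0 < l.getD (q : ℕ) 0 → y p < y q}
          = Set.univ := by
        ext y
        simp only [Set.mem_setOf_eq, Set.mem_univ, iff_true]
        exact fun h => absurd h hc
      rw [heq]
      exact MeasurableSet.univ

lemma measurePreserving_comp_equiv (e : Fin n ≃ Fin n) :
    MeasurePreserving (fun y : Fin n → ℝ => y ∘ e) volume volume := by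
  have h := MeasureTheory.volume_measurePreserving_piCongrLeft (fun _ : Fin n => ℝ) e.symm
  convert h using 1
  ext y a
  simp [MeasurableEquiv.piCongrLeft, Equiv.piCongrLeft]

lemma vol_region_congr (hl : l.Perm (List.range' 1 n)) (hl' : l'.Perm (List.range' 1 n)) :
    volume (region n l) = volume (region n l') := by
  classical
  -- build the equiv e with l.getD (e p) 0 = l'.getD p 0
  have hlen := perm_length hl
  have hlen' := perm_length hl'
  have hmem : ∀ p : Fin n, l.idxOf (l'.getD (p : ℕ) 0) < l.length := by
    intro p
    rw [List.idxOf_lt_length_iff]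
    rw [hl.mem_iff, List.mem_range'_1]
    have := perm_getD_mem hl' p
    omega
  have hmem2 : ∀ p : Fin n, l.idxOf (l'.getD (p : ℕ) 0) < n := by
    intro p
    have h := hmem p
    rwa [hlen] at h
  set e0 : Fin n → Fin n := fun p => ⟨l.idxOf (l'.getD (p : ℕ) 0), hmem2 p⟩ with he0
  have hval : ∀ p : Fin n, l.getD ((e0 p : ℕ)) 0 = l'.getD (p : ℕ) 0 := by
    intro p
    simp only [he0]
    rw [List.getD_eq_getElem l 0 (hmem p)]
    exact List.getElem_idxOf (hmem p)
  have hinj : Function.Injective e0 := by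
    intro p q h
    have : l'.getD (p : ℕ) 0 = l'.getD (q : ℕ) 0 := by
      rw [← hval p, ← hval q, h]
    exact perm_getD_inj hl' this
  set e : Fin n ≃ Fin n := Equiv.ofBijective e0 (Finite.injective_iff_bijective.1 hinj)
    with he
  have heval : ∀ p : Fin n, l.getD ((e p : ℕ)) 0 = l'.getD (p : ℕ) 0 := hval
  have hpre : (fun y : Fin n → ℝ => y ∘ e) ⁻¹' (region n l') = region n l := by
    ext y
    simp only [Set.mem_preimage, region, Set.mem_setOf_eq, Function.comp_apply]
    constructor
    · rintro ⟨hc, hcomp⟩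
      constructor
      · intro i
        have := hc (e.symm i)
        rwa [Equiv.apply_symm_apply] at this
      · intro p q hpq
        have h1 := hcomp (e.symm p) (e.symm q)
        rw [← heval (e.symm p), ← heval (e.symm q), Equiv.apply_symm_apply,
          Equiv.apply_symm_apply] at h1
        exact h1 hpq
    · rintro ⟨hc, hcomp⟩
      refine ⟨fun i => hc (e i), fun p q hpq => ?_⟩
      apply hcomp
      rw [heval p, heval q]
      exact hpq
  rw [← hpre]
  exact (measurePreserving_comp_equiv e).measure_preimage
    measurableSet_region.nullMeasurableSet

/-- The collection of all permutation lists of `1..n`. -/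
def Gall (n : ℕ) : Finset (List ℕ) := ((List.range' 1 n).permutations).toFinset

lemma mem_Gall : l ∈ Gall n ↔ l.Perm (List.range' 1 n) := by
  rw [Gall, List.mem_toFinset, List.mem_permutations]

lemma card_Gall : (Gall n).card = n ! := by
  rw [Gall, List.toFinset_card_of_nodup (List.nodup_permutations _ (List.nodup_range' (s := 1) (n := n))),
    List.length_permutations, List.length_range']

lemma sum_vol_regions : ∑ l ∈ Gall n, volume (region n l) = 1 := by
  classical
  have hdisj : (↑(Gall n) : Set (List ℕ)).PairwiseDisjoint (region n) := by
    intro a ha b hb hne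
    rw [Finset.mem_coe, mem_Gall] at ha hb
    exact region_disjoint ha hb hne
  rw [← measure_biUnion_finset hdisj (fun b _ => measurableSet_region)]
  apply le_antisymm
  · have hsub : (⋃ l ∈ Gall n, region n l) ⊆ Set.univ.pi (fun _ : Fin n => Set.Ioo (0:ℝ) 1) := by
      intro y hy
      simp only [Set.mem_iUnion] at hy
      obtain ⟨a, _, hy⟩ := hy
      intro i _
      exact hy.1 i
    calc volume (⋃ l ∈ Gall n, region n l)
        ≤ volume (Set.univ.pi (fun _ : Fin n => Set.Ioo (0:ℝ) 1)) := measure_mono hsub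
      _ = 1 := by simp [volume_pi_pi]
  · -- the union covers the open cube minus a null set
    set Bad : Set (Fin n → ℝ) := ⋃ (p : Fin n), ⋃ (q : Fin n),
      {y : Fin n → ℝ | p ≠ q ∧ y p = y q} with hBad
    have hBadnull : volume Bad = 0 := by
      apply measure_iUnion_null
      intro p
      apply measure_iUnion_null
      intro q
      rcases eq_or_ne p q with rfl | hne
      · simp
      · exact measure_mono_null (fun y hy => hy.2) (null_eq_coords p q hne)
    have hcover : Set.univ.pi (fun _ : Fin n => Set.Ioo (0:ℝ) 1)
        ⊆ (⋃ l ∈ Gall n, region n l) ∪ Bad := by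
      intro y hy
      by_cases hb : y ∈ Bad
      · exact Or.inr hb
      · left
        have hy1 : ∀ i, y i ∈ Set.Ioo (0:ℝ) 1 := fun i => hy i (Set.mem_univ i)
        have hy2 : ∀ p q : Fin n, p ≠ q → y p ≠ y q := by
          intro p q hpq hyeq
          exact hb (Set.mem_iUnion.2 ⟨p, Set.mem_iUnion.2 ⟨q, ⟨hpq, hyeq⟩⟩⟩)
        obtain ⟨a, hap, hay⟩ := exists_region hy1 hy2
        exact Set.mem_iUnion.2 ⟨a, Set.mem_iUnion.2 ⟨mem_Gall.2 hap, hay⟩⟩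
    calc (1 : ENNReal) = volume (Set.univ.pi (fun _ : Fin n => Set.Ioo (0:ℝ) 1)) := by
          simp [volume_pi_pi]
      _ ≤ volume ((⋃ l ∈ Gall n, region n l) ∪ Bad) := measure_mono hcover
      _ ≤ volume (⋃ l ∈ Gall n, region n l) + volume Bad := measure_union_le _ _
      _ = volume (⋃ l ∈ Gall n, region n l) := by rw [hBadnull, add_zero]

lemma vol_region (hl : l.Perm (List.range' 1 n)) :
    volume (region n l) = ((n ! : ENNReal))⁻¹ := by
  have hconst : ∀ a ∈ Gall n, volume (region n a) = volume (region n l) := by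
    intro a ha
    exact vol_region_congr (mem_Gall.1 ha) hl
  have hsum := sum_vol_regions (n := n)
  rw [Finset.sum_congr rfl hconst, Finset.sum_const, card_Gall] at hsum
  have hne : ((n ! : ENNReal)) ≠ 0 := by
    simp [Nat.factorial_ne_zero]
  have hnetop : ((n ! : ENNReal)) ≠ ⊤ := by simp
  rw [nsmul_eq_mul] at hsum
  calc volume (region n l) = ((n ! : ENNReal))⁻¹ * ((n ! : ENNReal) * volume (region n l)) := by
        rw [← mul_assoc, ENNReal.inv_mul_cancel hne hnetop, one_mul]
    _ = ((n ! : ENNReal))⁻¹ := by rw [hsum, mul_one]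

end Aux5

section Aux6

open Finset MeasureTheory

variable {n k : ℕ} {l l' : List ℕ}

lemma tmap_image_eq (hl : l.Perm (List.range' 1 n)) :
    Tmap n '' region n l
      = (fun z : Fin n → ℝ => z + (- dvec n l)) ⁻¹' (Lmap n '' region n l) := by
  ext z
  constructor
  · rintro ⟨y, hy, rfl⟩
    have hTy : Tmap n y = Lmap n y + dvec n l := by
      funext i
      exact tmap_eq_on_region hl hy i
    refine Set.mem_preimage.2 ⟨y, hy, ?_⟩
    rw [hTy]
    funext i
    simp
  · intro hz
    obtain ⟨y, hy, hzy⟩ := hz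
    refine ⟨y, hy, ?_⟩
    have hTy : Tmap n y = Lmap n y + dvec n l := by
      funext i
      exact tmap_eq_on_region hl hy i
    rw [hTy, hzy]
    funext i
    simp

lemma vol_tmap_image (hl : l.Perm (List.range' 1 n)) :
    volume (Tmap n '' region n l) = ((n ! : ENNReal))⁻¹ := by
  rw [tmap_image_eq hl, measure_preimage_add_right volume _ _,
    MeasureTheory.Measure.addHaar_image_linearMap volume (Lmap n), det_Lmap,
    vol_region hl]
  simp

lemma measurableSet_tmap_image (hl : l.Perm (List.range' 1 n)) :
    MeasurableSet (Tmap n '' region n l) := by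
  classical
  rw [tmap_image_eq hl]
  have hunit : IsUnit ((LinearMap.toMatrix (Pi.basisFun ℝ (Fin n))
      (Pi.basisFun ℝ (Fin n)) (Lmap n)).det) := by
    rw [LinearMap.det_toMatrix, det_Lmap]
    exact isUnit_one
  set LE := LinearEquiv.ofIsUnitDet hunit with hLE
  have h2 : (↑LE : (Fin n → ℝ) →ₗ[ℝ] (Fin n → ℝ)) = Lmap n := LinearEquiv.coe_ofIsUnitDet hunit
  have hco : ⇑(Lmap n) = ⇑LE := by rw [← h2]; rfl
  have himg : Lmap n '' region n l = ⇑(LE.toEquiv).symm ⁻¹' region n l := by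
    rw [hco, ← Equiv.image_eq_preimage_symm]
    rfl
  rw [himg]
  have hmeas2 : Measurable ⇑(LE.toEquiv).symm := by
    have : Continuous ⇑(LE.symm.toLinearMap) := LE.symm.toLinearMap.continuous_of_finiteDimensional
    exact this.measurable
  exact (measurable_add_const (-dvec n l)) (hmeas2 measurableSet_region)

lemma tmap_images_disjoint (hl : l.Perm (List.range' 1 n)) (hl' : l'.Perm (List.range' 1 n))
    (hne : l ≠ l') :
    Disjoint (Tmap n '' region n l) (Tmap n '' region n l') := by
  rw [Set.disjoint_left]
  rintro x ⟨y, hy, rfl⟩ ⟨y', hy', heq⟩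
  have hcube : ∀ z : Fin n → ℝ, z ∈ region n l ∪ region n l' →
      z ∈ {w : Fin n → ℝ | ∀ i, 0 ≤ w i ∧ w i < 1} := by
    rintro z (hz | hz) <;> exact fun i => ⟨le_of_lt (hz.1 i).1, (hz.1 i).2⟩
  have hyy' : y = y' := tmap_injOn (hcube y (Or.inl hy)) (hcube y' (Or.inr hy')) heq.symm
  subst hyy'
  exact Set.disjoint_left.1 (region_disjoint hl hl' hne) hy hy'

end Aux6

section Aux7

open Finset MeasureTheory

variable {n k : ℕ} {l : List ℕ}

/-- 0/1 vectors with coordinate sum `k-1` or `k`. -/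
def V01 (n k : ℕ) : Set (Fin n → ℝ) :=
  {v | (∀ i, v i = 0 ∨ v i = 1) ∧ (∑ i, v i = (k:ℝ) - 1 ∨ ∑ i, v i = (k:ℝ))}

/-- The slab `{x ∈ [0,1]^n : k-1 ≤ ∑ x ≤ k}`. -/
def slab (n k : ℕ) : Set (Fin n → ℝ) :=
  {x | (∀ i, 0 ≤ x i ∧ x i ≤ 1) ∧ ((k:ℝ) - 1 ≤ ∑ i, x i ∧ ∑ i, x i ≤ (k:ℝ))}

lemma convex_slab : Convex ℝ (slab n k) := by
  intro x hx y hy a b ha hb hab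
  have happly : ∀ i, (a • x + b • y) i = a * x i + b * y i := fun i => rfl
  refine ⟨fun i => ?_, ?_, ?_⟩
  · rw [happly i]
    have h1 := hx.1 i
    have h2 := hy.1 i
    constructor
    · nlinarith [h1.1, h2.1]
    · nlinarith [h1.2, h2.2]
  · have hsum : ∑ i, (a • x + b • y) i = a * ∑ i, x i + b * ∑ i, y i := by
      simp only [happly, Finset.sum_add_distrib, Finset.mul_sum]
    rw [hsum]
    nlinarith [mul_le_mul_of_nonneg_left hx.2.1 ha, mul_le_mul_of_nonneg_left hy.2.1 hb]
  · have hsum : ∑ i, (a • x + b • y) i = a * ∑ i, x i + b * ∑ i, y i := by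
      simp only [happly, Finset.sum_add_distrib, Finset.mul_sum]
    rw [hsum]
    nlinarith [mul_le_mul_of_nonneg_left hx.2.2 ha, mul_le_mul_of_nonneg_left hy.2.2 hb]

lemma V01_subset_slab : V01 n k ⊆ slab n k := by
  rintro v ⟨hv1, hv2⟩
  refine ⟨fun i => ?_, ?_, ?_⟩
  · rcases hv1 i with h | h <;> rw [h] <;> norm_num
  · rcases hv2 with h | h <;> rw [h] <;> linarith
  · rcases hv2 with h | h <;> rw [h] <;> linarith

lemma sum_proj_indicator (T : Finset (Fin (n+1))) :
    ∑ i : Fin n, (if (i.castSucc ∈ T) then (1:ℝ) else 0)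
      = ((T.erase (Fin.last n)).card : ℝ) := by
  classical
  rw [Finset.sum_boole]
  congr 1
  apply Finset.card_nbij (fun i => i.castSucc)
  · intro a ha
    simp only [Finset.coe_filter, Finset.mem_coe, Set.mem_setOf_eq, Finset.mem_filter, Finset.mem_univ, true_and] at ha
    exact Finset.mem_erase.2 ⟨(Fin.castSucc_lt_last a).ne, ha⟩
  · intro a _ b _ hab
    exact Fin.castSucc_injective n hab
  · intro j hj
    rw [Finset.coe_erase, Set.mem_diff] at hj
    have hjne : j ≠ Fin.last n := by
      intro hlast
      exact hj.2 (by simp [hlast])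
    obtain ⟨i, hi⟩ := Fin.exists_castSucc_eq.2 hjne
    refine ⟨i, ?_, hi⟩
    simp only [Set.mem_image, Finset.coe_filter, Set.mem_setOf_eq, Finset.mem_coe]
    simp only [Finset.mem_coe, Finset.mem_filter, Finset.mem_univ, true_and]
    rw [hi]
    exact hj.1

/-- The projection of the vertex set of the hypersimplex. -/
lemma proj_image_vertices (h1 : 1 ≤ k) :
    (fun x : Fin (n + 1) → ℝ => fun i : Fin n => x i.castSucc) ''
      {x | ∃ T : Finset (Fin (n + 1)), T.card = k ∧
        x = fun i => if i ∈ T then (1 : ℝ) else 0} = V01 n k := by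
  classical
  ext v
  constructor
  · rintro ⟨x, ⟨T, hT, rfl⟩, rfl⟩
    constructor
    · intro i
      by_cases h : i.castSucc ∈ T <;> simp [h]
    · have hsum : ∑ i : Fin n, (if (i.castSucc ∈ T) then (1:ℝ) else 0)
          = ((T.erase (Fin.last n)).card : ℝ) := sum_proj_indicator T
      by_cases hlast : Fin.last n ∈ T
      · left
        rw [hsum, Finset.card_erase_of_mem hlast, hT, Nat.cast_sub h1, Nat.cast_one]
      · right
        rw [hsum, Finset.erase_eq_of_notMem hlast, hT]
  · rintro ⟨hv1, hv2⟩
    set Tv : Finset (Fin n) := Finset.univ.filter (fun i => v i = 1) with hTv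
    have hmemTv : ∀ i, i ∈ Tv ↔ v i = 1 := by
      intro i; simp [hTv]
    have hsumv : ∑ i, v i = (Tv.card : ℝ) := by
      rw [← Finset.sum_boole]
      apply Finset.sum_congr rfl
      intro i _
      rcases hv1 i with h | h
      · rw [h]; norm_num
      · rw [h]; norm_num
    have hlift : ∀ i : Fin n, (if i ∈ Tv then (1:ℝ) else 0) = v i := by
      intro i
      by_cases h : i ∈ Tv
      · rw [if_pos h, (hmemTv i).1 h]
      · rw [if_neg h]
        rcases hv1 i with h' | h'
        · rw [h']
        · exact absurd ((hmemTv i).2 h') h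
    rcases hv2 with hsum | hsum
    · -- card Tv = k - 1, add the last coordinate
      have hcard : Tv.card = k - 1 := by
        have : (Tv.card : ℝ) = ((k - 1 : ℕ) : ℝ) := by
          rw [← hsumv, hsum, Nat.cast_sub h1, Nat.cast_one]
        exact_mod_cast this
      set T : Finset (Fin (n+1)) :=
        (Tv.map ⟨Fin.castSucc, Fin.castSucc_injective n⟩) ∪ {Fin.last n} with hT
      have hlastnot : Fin.last n ∉ Tv.map ⟨Fin.castSucc, Fin.castSucc_injective n⟩ := by
        rw [Finset.mem_map]
        rintro ⟨a, _, ha⟩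
        exact (Fin.castSucc_lt_last a).ne ha
      refine ⟨fun i => if i ∈ T then (1:ℝ) else 0, ⟨T, ?_, rfl⟩, ?_⟩
      · rw [hT, Finset.card_union_of_disjoint (Finset.disjoint_singleton_right.2 hlastnot),
          Finset.card_map, Finset.card_singleton, hcard]
        omega
      · funext i
        show (if i.castSucc ∈ T then (1:ℝ) else 0) = v i
        have : i.castSucc ∈ T ↔ i ∈ Tv := by
          rw [hT, Finset.mem_union, Finset.mem_singleton]
          constructor
          · rintro (h | h)
            · exact (Finset.mem_map' _).1 h
            · exact absurd h (Fin.castSucc_lt_last i).ne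
          · intro h
            exact Or.inl ((Finset.mem_map' _).2 h)
        rw [show (if i.castSucc ∈ T then (1:ℝ) else 0) = if i ∈ Tv then (1:ℝ) else 0 by
          by_cases h : i ∈ Tv
          · rw [if_pos h, if_pos (this.2 h)]
          · rw [if_neg h, if_neg (fun hh => h (this.1 hh))]]
        exact hlift i
    · -- card Tv = k
      have hcard : Tv.card = k := by
        have : (Tv.card : ℝ) = (k : ℝ) := by rw [← hsumv, hsum]
        exact_mod_cast this
      set T : Finset (Fin (n+1)) := Tv.map ⟨Fin.castSucc, Fin.castSucc_injective n⟩ with hT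
      refine ⟨fun i => if i ∈ T then (1:ℝ) else 0, ⟨T, ?_, rfl⟩, ?_⟩
      · rw [hT, Finset.card_map, hcard]
      · funext i
        show (if i.castSucc ∈ T then (1:ℝ) else 0) = v i
        rw [show (if i.castSucc ∈ T then (1:ℝ) else 0) = if i ∈ Tv then (1:ℝ) else 0 by
          by_cases h : i ∈ Tv
          · rw [if_pos h, if_pos (by rw [hT]; exact (Finset.mem_map' _).2 h)]
          · rw [if_neg h, if_neg (by rw [hT]; exact fun hh => h ((Finset.mem_map' _).1 hh))]]
        exact hlift i

lemma image_hypersimplex (h1 : 1 ≤ k) :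
    (fun x : Fin (n + 1) → ℝ => fun i : Fin n => x i.castSucc) '' hypersimplex n k
      = convexHull ℝ (V01 n k) := by
  have hproj : (fun x : Fin (n + 1) → ℝ => fun i : Fin n => x i.castSucc)
      = ⇑((LinearMap.funLeft ℝ ℝ (Fin.castSucc : Fin n → Fin (n+1))).toAffineMap) := rfl
  rw [hypersimplex, hproj, AffineMap.image_convexHull, ← hproj, proj_image_vertices h1]

end Aux7

section Aux8

open Finset MeasureTheory

variable {n k : ℕ} {l : List ℕ}

lemma indexOf_getD (hl : l.Perm (List.range' 1 n)) (p : Fin n) :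
    l.idxOf (l.getD (p : ℕ) 0) = (p : ℕ) := by
  classical
  have hlen := perm_length hl
  have hpl : (p : ℕ) < l.length := by rw [hlen]; exact p.isLt
  have hval : l[(p : ℕ)] = l.getD (p : ℕ) 0 := (List.getD_eq_getElem l 0 hpl).symm
  have hmem : l.getD (p : ℕ) 0 ∈ l := hval ▸ List.getElem_mem hpl
  have hidx : l.idxOf (l.getD (p : ℕ) 0) < l.length := List.idxOf_lt_length_iff.2 hmem
  have hval2 : l[l.idxOf (l.getD (p : ℕ) 0)] = l.getD (p : ℕ) 0 := List.getElem_idxOf hidx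
  exact ((perm_nodup hl).getElem_inj_iff).1 (hval2.trans hval.symm)

lemma tmap_image_subset_hull (hn : 0 < n) (h1 : 1 ≤ k)
    (hl : l.Perm (List.range' 1 n)) (hdes : listDescents l = k - 1) :
    Tmap n '' region n l ⊆ convexHull ℝ (V01 n k) := by
  classical
  rintro x ⟨y, hy, rfl⟩
  have hlen := perm_length hl
  have hcube := hy.1
  -- the rank-ordered values
  set b : ℕ → ℝ := fun r => if h : l.idxOf (r + 1) < n then y ⟨l.idxOf (r + 1), h⟩ else 1
    with hb
  set B : ℕ → ℝ := fun m => if m = 0 then 0 else b (m - 1) with hB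
  set a : ℕ → ℝ := fun r => B (r + 1) - B r with ha
  set u : ℕ → (Fin n → ℝ) := fun r => fun p => if r + 1 ≤ l.getD (p : ℕ) 0 then 1 else 0
    with hu
  set v : ℕ → (Fin n → ℝ) :=
    fun r => fun i => (Wf n (u r) ((i : ℕ) + 1) - Wf n (u r) (i : ℕ)) + dvec n l i with hv
  have hB0 : B 0 = 0 := by simp [hB]
  have hBsucc : ∀ m, B (m + 1) = b m := by intro m; simp [hB]
  -- b r = y at the position of value r+1, for r < n
  have hbY : ∀ r, r < n → ∃ p : Fin n, l.getD (p : ℕ) 0 = r + 1 ∧ b r = y p := by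
    intro r hr
    have hmem : (r + 1) ∈ l := by
      rw [hl.mem_iff, List.mem_range'_1]
      omega
    have hidx : l.idxOf (r + 1) < l.length := List.idxOf_lt_length_iff.2 hmem
    have hidxn : l.idxOf (r + 1) < n := by rwa [hlen] at hidx
    refine ⟨⟨l.idxOf (r + 1), hidxn⟩, ?_, ?_⟩
    · rw [List.getD_eq_getElem l 0 hidx]
      exact List.getElem_idxOf hidx
    · simp only [hb]
      simp only [dif_pos hidxn]
  have hbn : b n = 1 := by
    have hnotmem : (n + 1) ∉ l := by
      rw [hl.mem_iff, List.mem_range'_1]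
      omega
    have : l.idxOf (n + 1) = l.length := List.idxOf_eq_length_iff.2 hnotmem
    simp only [hb]
    simp only [this, hlen]
    rw [dif_neg (lt_irrefl n)]
  have hbval : ∀ p : Fin n, b (l.getD (p : ℕ) 0 - 1) = y p := by
    intro p
    obtain ⟨ha1, ha2⟩ := perm_getD_mem hl p
    have heq : l.getD (p : ℕ) 0 - 1 + 1 = l.getD (p : ℕ) 0 := by omega
    have hidxp := indexOf_getD hl p
    simp only [hb]
    simp only [heq, hidxp]
    rw [dif_pos p.isLt]
  -- monotonicity
  have hmono : ∀ r, r + 1 ≤ n → b r ≤ b (r + 1) := by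
    intro r hr
    obtain ⟨p, hp1, hp2⟩ := hbY r (by omega)
    rcases Nat.lt_or_ge (r + 1) n with h | h
    · obtain ⟨q, hq1, hq2⟩ := hbY (r + 1) h
      rw [hp2, hq2]
      exact le_of_lt (hy.2 p q (by omega))
    · have : r + 1 = n := by omega
      rw [this, hbn, hp2]
      exact le_of_lt (hcube p).2
  have hbmono : ∀ r s, r ≤ s → s ≤ n → b r ≤ b s := by
    intro r s hrs hsn
    induction s with
    | zero => interval_cases r; rfl
    | succ m ih =>
      rcases Nat.lt_or_ge r (m + 1) with h | h
      · exact le_trans (ih (by omega) (by omega)) (hmono m hsn)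
      · have : r = m + 1 := by omega
        rw [this]
  have hb0 : 0 ≤ b 0 := by
    obtain ⟨p, _, hp2⟩ := hbY 0 hn
    rw [hp2]
    exact le_of_lt (hcube p).1
  have ha_nonneg : ∀ r ∈ Finset.range (n + 1), 0 ≤ a r := by
    intro r hr
    rw [Finset.mem_range] at hr
    simp only [ha]
    rcases Nat.eq_zero_or_eq_succ_pred r with h0 | hs
    · rw [h0, hB0, hBsucc]
      simpa using hb0
    · set m := r - 1
      have : r = m + 1 := hs
      rw [this, hBsucc, hBsucc]
      have := hmono m (by omega)
      linarith
  have ha_sum : ∑ r ∈ Finset.range (n + 1), a r = 1 := by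
    simp only [ha]
    rw [Finset.sum_range_sub B (n + 1), hB0, hBsucc, hbn]
    ring
  -- partial sums of a
  have hBsum : ∀ m, m ≤ n + 1 → ∑ r ∈ Finset.range m, a r = B m := by
    intro m _
    rw [ha, Finset.sum_range_sub B m, hB0, sub_zero]
  -- the key identity: y as a convex combination of the u r
  have hy_eq : ∀ p : Fin n, ∑ r ∈ Finset.range (n + 1), a r * u r p = y p := by
    intro p
    obtain ⟨ha1, ha2⟩ := perm_getD_mem hl p
    set a0 := l.getD (p : ℕ) 0 with ha0
    have step1 : ∀ r, a r * u r p = if r < a0 then a r else 0 := by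
      intro r
      simp only [hu]
      by_cases h : r + 1 ≤ a0
      · rw [if_pos h, if_pos (by omega), mul_one]
      · rw [if_neg h, if_neg (by omega), mul_zero]
    rw [Finset.sum_congr rfl (fun r _ => step1 r)]
    rw [← Finset.sum_filter]
    have hfil : Finset.filter (fun r => r < a0) (Finset.range (n + 1)) = Finset.range a0 := by
      ext r
      simp only [Finset.mem_filter, Finset.mem_range]
      omega
    rw [hfil, hBsum a0 (by omega)]
    simp only [hB]
    rw [if_neg (show ¬ a0 = 0 by omega)]
    exact hbval p
  -- each v r is a 0/1 vector with the right coordinate sum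
  have hdvec0 : ∀ i : Fin n, (i : ℕ) = 0 → dvec n l i = 0 := by
    intro i hi
    rw [dvec, hi]
    simp
  have hv01 : ∀ r ∈ Finset.range (n + 1), v r ∈ V01 n k := by
    intro r hr
    constructor
    · intro i
      simp only [hv]
      rcases Nat.eq_zero_or_eq_succ_pred (i : ℕ) with h0 | hs
      · rw [h0, Wf_zero, hdvec0 i h0, Wf_succ _ (by omega : 0 < n)]
        simp only [hu]
        by_cases h : r + 1 ≤ l.getD ((⟨0, by omega⟩ : Fin n) : ℕ) 0
        · rw [if_pos h]; right; ring
        · rw [if_neg h]; left; ring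
      · set m := (i : ℕ) - 1 with hm
        have hieq : (i : ℕ) = m + 1 := hs
        have hmn : m < n := by have := i.isLt; omega
        have hm1n : m + 1 < n := by have := i.isLt; omega
        rw [hieq, Wf_succ _ hm1n, Wf_succ _ hmn, dvec, hieq]
        have hs1 : (m + 1 - 1) = m := by omega
        rw [hs1]
        simp only [hu]
        set c1 := l.getD (m + 1) 0 with hc1
        set c0 := l.getD m 0 with hc0
        have hnec : c1 ≠ c0 := by
          intro h
          have := perm_getD_inj hl (p := ⟨m + 1, hm1n⟩) (q := ⟨m, hmn⟩) h
          simp [Fin.ext_iff] at this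
        by_cases hA : r + 1 ≤ c1 <;> by_cases hB' : r + 1 ≤ c0
        · rw [if_pos hA, if_pos hB']
          by_cases hC : c1 < c0
          · rw [if_pos hC]; right; ring
          · rw [if_neg hC]; left; ring
        · rw [if_pos hA, if_neg hB', if_neg (by omega)]
          right; ring
        · rw [if_neg hA, if_pos hB', if_pos (by omega)]
          left; ring
        · rw [if_neg hA, if_neg hB']
          by_cases hC : c1 < c0
          · rw [if_pos hC]; right; ring
          · rw [if_neg hC]; left; ring
    · -- the coordinate sum of v r
      have hsplit : ∑ i : Fin n, v r i
          = (∑ i : Fin n, (Wf n (u r) ((i : ℕ) + 1) - Wf n (u r) (i : ℕ)))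
            + ∑ i : Fin n, dvec n l i := by
        rw [← Finset.sum_add_distrib]
      have htel : ∑ i : Fin n, (Wf n (u r) ((i : ℕ) + 1) - Wf n (u r) (i : ℕ))
          = Wf n (u r) n := by
        rw [Fin.sum_univ_eq_sum_range (fun m => Wf n (u r) (m + 1) - Wf n (u r) m) n,
          Finset.sum_range_sub (Wf n (u r)) n, Wf_zero, sub_zero]
      have hdescast : (listDescents l : ℝ) = (k : ℝ) - 1 := by
        rw [hdes, Nat.cast_sub h1, Nat.cast_one]
      have hWn : Wf n (u r) n = u r ⟨n - 1, by omega⟩ := by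
        have h' := Wf_succ (u r) (show n - 1 < n by omega)
        rwa [show n - 1 + 1 = n from by omega] at h'
      rw [hsplit, htel, sum_dvec hlen, hdescast, hWn]
      simp only [hu]
      by_cases h : r + 1 ≤ l.getD (((⟨n - 1, by omega⟩ : Fin n)) : ℕ) 0
      · rw [if_pos h]; right; ring
      · rw [if_neg h]; left; ring
  -- Tmap y is the corresponding convex combination of the v r
  have hfinal : Tmap n y = ∑ r ∈ Finset.range (n + 1), a r • v r := by
    funext i
    rw [tmap_eq_on_region hl hy i, Finset.sum_apply]
    have hterm : ∀ r, (a r • v r) i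
        = a r * Wf n (u r) ((i : ℕ) + 1) - a r * Wf n (u r) (i : ℕ) + a r * dvec n l i := by
      intro r
      rw [Pi.smul_apply, smul_eq_mul, hv]
      simp only []
      ring
    rw [Finset.sum_congr rfl (fun r _ => hterm r)]
    symm
    have key : ∀ m, m ≤ n → ∑ r ∈ Finset.range (n + 1), a r * Wf n (u r) m = Wf n y m := by
      intro m hm
      rcases Nat.eq_zero_or_eq_succ_pred m with h0 | hs2
      · rw [h0]
        simp only [Wf_zero, mul_zero, Finset.sum_const_zero]
      · set s := m - 1 with hsdef
        have hmeq : m = s + 1 := hs2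
        have hsn : s < n := by omega
        rw [hmeq, Wf_succ _ hsn]
        have : ∀ r, a r * Wf n (u r) (s + 1) = a r * u r ⟨s, hsn⟩ := by
          intro r
          rw [Wf_succ _ hsn]
        rw [Finset.sum_congr rfl (fun r _ => this r), hy_eq ⟨s, hsn⟩]
    have hsum3 : ∑ r ∈ Finset.range (n + 1), a r * dvec n l i
        = dvec n l i := by
      rw [← Finset.sum_mul, ha_sum, one_mul]
    calc ∑ r ∈ Finset.range (n + 1),
          (a r * Wf n (u r) ((i : ℕ) + 1) - a r * Wf n (u r) (i : ℕ) + a r * dvec n l i)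
        = (∑ r ∈ Finset.range (n + 1), a r * Wf n (u r) ((i : ℕ) + 1))
            - (∑ r ∈ Finset.range (n + 1), a r * Wf n (u r) (i : ℕ))
            + ∑ r ∈ Finset.range (n + 1), a r * dvec n l i := by
          rw [← Finset.sum_sub_distrib, ← Finset.sum_add_distrib]
      _ = Wf n y ((i : ℕ) + 1) - Wf n y (i : ℕ) + dvec n l i := by
          rw [key ((i : ℕ) + 1) i.isLt, key (i : ℕ) (le_of_lt (lt_of_lt_of_le i.isLt (by omega))),
            hsum3]
  rw [hfinal]
  exact (convex_convexHull ℝ (V01 n k)).sum_mem ha_nonneg ha_sum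
    (fun r hr => subset_convexHull ℝ (V01 n k) (hv01 r hr))

end Aux8

section Aux9

open Finset MeasureTheory

variable {n k : ℕ} {l : List ℕ}

/-- The permutation lists of `1..n` with exactly `k-1` descents. -/
def Gd (n k : ℕ) : Finset (List ℕ) :=
  ((List.range' 1 n).permutations.filter
    (fun l => decide (listDescents l = k - 1))).toFinset

lemma mem_Gd : l ∈ Gd n k ↔ l.Perm (List.range' 1 n) ∧ listDescents l = k - 1 := by
  rw [Gd, List.mem_toFinset, List.mem_filter, List.mem_permutations, decide_eq_true_eq]

lemma card_Gd : (Gd n k).card = eulerianA n k := by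
  rw [Gd, eulerianA,
    List.toFinset_card_of_nodup
      (((List.nodup_permutations _ (List.nodup_range' (s := 1) (n := n)))).filter _),
    List.countP_eq_length_filter]

lemma slab_cover (hn : 0 < n) :
    slab n k \ Nset n ⊆ ⋃ l ∈ Gd n k, Tmap n '' region n l := by
  classical
  rintro x ⟨hxs, hxN⟩
  set XN : ℕ → ℝ := fun m => if h : m < n then x ⟨m, h⟩ else 0 with hXN
  set PS : ℕ → ℝ := fun m => ∑ j ∈ Finset.range m, XN j with hPS
  have hNs : ∀ (s : Finset (Fin n)), s.Nonempty → ∀ z : ℤ, ∑ j ∈ s, x j ≠ (z:ℝ) := by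
    intro s hs z hsum
    exact hxN (Set.mem_iUnion.2 ⟨s, Set.mem_iUnion.2 ⟨z, ⟨hs, hsum⟩⟩⟩)
  have hlt1 : ∀ i : Fin n, x i < 1 := by
    intro i
    rcases lt_or_eq_of_le (hxs.1 i).2 with h | h
    · exact h
    · exact absurd (by rw [Finset.sum_singleton, h]; norm_num :
        ∑ j ∈ ({i} : Finset (Fin n)), x j = ((1:ℤ):ℝ))
        (hNs {i} ⟨i, Finset.mem_singleton_self i⟩ 1)
  have hx01 : ∀ i : Fin n, 0 ≤ x i := fun i => (hxs.1 i).1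
  have hPS0 : PS 0 = 0 := by simp [hPS]
  have hPSsub : ∀ m m' : ℕ, m' ≤ m → m ≤ n → PS m - PS m'
      = ∑ j ∈ Finset.univ.filter (fun j : Fin n => m' ≤ (j:ℕ) ∧ (j:ℕ) < m), x j := by
    intro m m' hm' hm
    rw [Finset.sum_filter]
    have h1 : ∑ j : Fin n, (if m' ≤ (j:ℕ) ∧ (j:ℕ) < m then x j else 0)
        = ∑ j ∈ Finset.range n, (if m' ≤ j ∧ j < m then XN j else 0) := by
      rw [← Fin.sum_univ_eq_sum_range (fun j => if m' ≤ j ∧ j < m then XN j else 0) n]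
      apply Finset.sum_congr rfl
      intro j _
      by_cases hc : m' ≤ (j:ℕ) ∧ (j:ℕ) < m
      · rw [if_pos hc, if_pos hc]
        simp [hXN, j.isLt]
      · rw [if_neg hc, if_neg hc]
    have h2 : ∑ j ∈ Finset.range n, (if m' ≤ j ∧ j < m then XN j else 0)
        = ∑ j ∈ Finset.Ico m' m, XN j := by
      rw [← Finset.sum_filter]
      congr 1
      ext j
      simp only [Finset.mem_filter, Finset.mem_range, Finset.mem_Ico]
      omega
    rw [h1, h2, Finset.sum_Ico_eq_sub _ hm']
  set y : Fin n → ℝ := fun i => Int.fract (PS ((i:ℕ) + 1)) with hy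
  have hy01 : ∀ i, y i ∈ Set.Ioo (0:ℝ) 1 := by
    intro i
    refine ⟨?_, Int.fract_lt_one _⟩
    rcases lt_or_eq_of_le (Int.fract_nonneg (PS ((i:ℕ)+1))) with h | h
    · exact h
    · exfalso
      have hfloor : PS ((i:ℕ)+1) = ((⌊PS ((i:ℕ)+1)⌋ : ℤ) : ℝ) := by
        have := Int.self_sub_floor (PS ((i:ℕ)+1))
        rw [← h] at this
        linarith
      have hps := hPSsub ((i:ℕ)+1) 0 (by omega) i.isLt
      rw [hPS0, sub_zero] at hps
      refine hNs (Finset.univ.filter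
        (fun j : Fin n => 0 ≤ (j:ℕ) ∧ (j:ℕ) < (i:ℕ) + 1)) ⟨i, ?_⟩ ⌊PS ((i:ℕ)+1)⌋
        (by rw [← hps]; exact hfloor)
      simp only [Finset.mem_filter, Finset.mem_univ, true_and]
      omega
  have hyinj : ∀ p q : Fin n, p ≠ q → y p ≠ y q := by
    have key : ∀ p q : Fin n, (p:ℕ) < (q:ℕ) → y p ≠ y q := by
      intro p q hlt heq
      simp only [hy] at heq
      obtain ⟨z, hz⟩ := Int.fract_eq_fract.1 heq
      have hps := hPSsub ((q:ℕ)+1) ((p:ℕ)+1) (by omega) q.isLt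
      refine hNs (Finset.univ.filter
        (fun j : Fin n => (p:ℕ) + 1 ≤ (j:ℕ) ∧ (j:ℕ) < (q:ℕ) + 1)) ⟨q, ?_⟩ (-z) ?_
      · simp only [Finset.mem_filter, Finset.mem_univ, true_and]
        omega
      · rw [← hps]
        push_cast
        linarith
    intro p q hpq heq
    rcases Nat.lt_or_ge (p:ℕ) (q:ℕ) with h | h
    · exact key p q h heq
    · have h' : (q:ℕ) < (p:ℕ) := by
        rcases Nat.lt_or_ge (q:ℕ) (p:ℕ) with h2 | h2
        · exact h2
        · exact absurd (Fin.ext (by omega)) hpq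
      exact key q p h' heq.symm
  obtain ⟨lw, hlw, hylw⟩ := exists_region hy01 hyinj
  have hWfy : ∀ m, m ≤ n → Wf n y m = Int.fract (PS m) := by
    intro m hm
    rcases Nat.eq_zero_or_eq_succ_pred m with h0 | hs
    · rw [h0, Wf_zero, hPS0, Int.fract_zero]
    · set m' := m - 1
      have hmeq : m = m' + 1 := hs
      have hm'n : m' < n := by omega
      rw [hmeq, Wf_succ _ hm'n]
  have hTx : Tmap n y = x := by
    funext i
    have hin : (i:ℕ) ≤ n := le_of_lt i.isLt
    rw [Tmap, hWfy ((i:ℕ)+1) i.isLt, hWfy (i:ℕ) hin, fract_sub_fract]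
    have hdiff : PS ((i:ℕ)+1) - PS (i:ℕ) = XN (i:ℕ) := by
      simp only [hPS]
      rw [Finset.sum_range_succ]
      ring
    rw [hdiff]
    have hXx : XN (i:ℕ) = x i := by
      simp [hXN, i.isLt]
    rw [hXx, Int.fract_eq_self.2 ⟨hx01 i, hlt1 i⟩]
  have hsum := sum_tmap hlw hylw
  rw [hTx] at hsum
  have hWn : Wf n y n = y ⟨n - 1, by omega⟩ := by
    have h' := Wf_succ y (show n - 1 < n by omega)
    rwa [show n - 1 + 1 = n from by omega] at h'
  have h0 := hy01 ⟨n - 1, by omega⟩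
  have hD : listDescents lw = k - 1 := by
    have hb1 : (k:ℝ) - 1 ≤ ∑ i, x i := hxs.2.1
    have hb2 : ∑ i, x i ≤ (k:ℝ) := hxs.2.2
    rw [hsum, hWn] at hb1 hb2
    have hlt : (listDescents lw : ℝ) < (k:ℝ) := by
      have := h0.1
      linarith
    have hgt : (k:ℝ) < (listDescents lw : ℝ) + 2 := by
      have := h0.2
      linarith
    have h1' : listDescents lw < k := by exact_mod_cast hlt
    have h2' : k < listDescents lw + 2 := by exact_mod_cast hgt
    omega
  exact Set.mem_iUnion.2 ⟨lw, Set.mem_iUnion.2 ⟨mem_Gd.2 ⟨hlw, hD⟩, ⟨y, hylw, hTx⟩⟩⟩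

end Aux9
/-- `n! · Vol(Δ_{k,n}) = A(n,k)`, where the normalized volume is the
usual volume of the projection onto the first `n` coordinates. -/
theorem hypersimplex_volume (n k : ℕ) (h1 : 1 ≤ k) (h2 : k ≤ n) :
    (n ! : ℝ) *
      (volume ((fun x : Fin (n + 1) → ℝ => fun i : Fin n => x i.castSucc) ''
        hypersimplex n k)).toReal = eulerianA n k := by
  classical
  have hn : 0 < n := lt_of_lt_of_le h1 h2
  rw [image_hypersimplex h1]
  have hvol : volume (convexHull ℝ (V01 n k))
      = (eulerianA n k : ENNReal) * ((n ! : ENNReal))⁻¹ := by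
    apply le_antisymm
    · have hsub1 : convexHull ℝ (V01 n k) ⊆ slab n k :=
        convexHull_min V01_subset_slab convex_slab
      have hsub2 : slab n k ⊆ (⋃ l ∈ Gd n k, Tmap n '' region n l) ∪ Nset n := by
        intro x hx
        by_cases hN : x ∈ Nset n
        · exact Or.inr hN
        · exact Or.inl (slab_cover hn ⟨hx, hN⟩)
      calc volume (convexHull ℝ (V01 n k))
          ≤ volume ((⋃ l ∈ Gd n k, Tmap n '' region n l) ∪ Nset n) :=
            measure_mono (hsub1.trans hsub2)
        _ ≤ volume (⋃ l ∈ Gd n k, Tmap n '' region n l) + volume (Nset n) :=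
            measure_union_le _ _
        _ = volume (⋃ l ∈ Gd n k, Tmap n '' region n l) := by rw [null_Nset, add_zero]
        _ ≤ ∑ l ∈ Gd n k, volume (Tmap n '' region n l) := measure_biUnion_finset_le _ _
        _ = ∑ l ∈ Gd n k, ((n ! : ENNReal))⁻¹ :=
            Finset.sum_congr rfl (fun l hl => vol_tmap_image (mem_Gd.1 hl).1)
        _ = ((Gd n k).card : ENNReal) * ((n ! : ENNReal))⁻¹ := by
            rw [Finset.sum_const, nsmul_eq_mul]
        _ = (eulerianA n k : ENNReal) * ((n ! : ENNReal))⁻¹ := by rw [card_Gd]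
    · have hsub : (⋃ l ∈ Gd n k, Tmap n '' region n l) ⊆ convexHull ℝ (V01 n k) := by
        intro x hx
        simp only [Set.mem_iUnion] at hx
        obtain ⟨l, hl, hx⟩ := hx
        exact tmap_image_subset_hull hn h1 (mem_Gd.1 hl).1 (mem_Gd.1 hl).2 hx
      have hdisj : (↑(Gd n k) : Set (List ℕ)).PairwiseDisjoint
          (fun l => Tmap n '' region n l) := by
        intro a ha b hb hne
        exact tmap_images_disjoint (mem_Gd.1 (Finset.mem_coe.1 ha)).1
          (mem_Gd.1 (Finset.mem_coe.1 hb)).1 hne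
      calc (eulerianA n k : ENNReal) * ((n ! : ENNReal))⁻¹
          = ∑ l ∈ Gd n k, volume (Tmap n '' region n l) := by
            rw [Finset.sum_congr rfl (fun l hl => vol_tmap_image (mem_Gd.1 hl).1),
              Finset.sum_const, nsmul_eq_mul, card_Gd]
        _ = volume (⋃ l ∈ Gd n k, Tmap n '' region n l) :=
            (measure_biUnion_finset hdisj
              (fun l hl => measurableSet_tmap_image (mem_Gd.1 hl).1)).symm
        _ ≤ volume (convexHull ℝ (V01 n k)) := measure_mono hsub
  rw [hvol, ENNReal.toReal_mul, ENNReal.toReal_inv]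
  have h1' : ((eulerianA n k : ENNReal)).toReal = (eulerianA n k : ℝ) := by simp
  have h2' : ((n ! : ENNReal)).toReal = (n ! : ℝ) := by simp
  rw [h1', h2']
  have hfac : (n ! : ℝ) ≠ 0 := Nat.cast_ne_zero.2 (Nat.factorial_ne_zero n)
  field_simp

end MixedEulerian
end

section
/- For real numbers y_1 ≥ y_2 ≥ ... ≥ y_{n+1}, the permutohedron P(y_1,...,y_{n+1}) equals the set of points (x_1,...,x_{n+1}) ∈ ℝ^{n+1} such that x_1 + ... + x_{n+1} = y_1 + ... + y_{n+1} and, for every nonempty proper subset {i_1,...,i_k} of {1,...,n+1}, x_{i_1} + ... + x_{i_k} ≤ y_1 + ... + y_k. -/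
open scoped Pointwise
open MeasureTheory Nat

namespace MixedEulerian

lemma abel_aux (d c : ℕ → ℝ) :
    ∀ N, (∀ k, k < N → d (k+1) ≤ d k) →
      (∀ M, 1 ≤ M → M ≤ N + 1 → 0 ≤ ∑ j ∈ Finset.range M, c j) →
      d N * ∑ j ∈ Finset.range (N+1), c j ≤ ∑ j ∈ Finset.range (N+1), d j * c j := by
  intro N
  induction N with
  | zero => intro _ _; simp
  | succ N ih =>
    intro hd hS
    have h1 : d N * ∑ j ∈ Finset.range (N+1), c j ≤ ∑ j ∈ Finset.range (N+1), d j * c j :=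
      ih (fun k hk => hd k (by omega)) (fun M h1 h2 => hS M h1 (by omega))
    have h2 : 0 ≤ ∑ j ∈ Finset.range (N+1), c j := hS (N+1) (by omega) (by omega)
    have h3 : d (N+1) ≤ d N := hd N (by omega)
    rw [Finset.sum_range_succ (fun j => d j * c j), Finset.sum_range_succ c]
    nlinarith [h1, h2, h3]

lemma strictMono_le_val {k m : ℕ} (f : Fin k → Fin m) (hf : StrictMono f) (j : Fin k) :
    (j : ℕ) ≤ (f j : ℕ) := by
  obtain ⟨v, hv⟩ := j
  induction v with
  | zero => simp
  | succ i ih =>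
    have h1 : (⟨i, by omega⟩ : Fin k) < ⟨i+1, hv⟩ := by simp [Fin.lt_def]
    have h2 := hf h1
    have h3 := ih (by omega)
    rw [Fin.lt_def] at h2
    simp only [Fin.val_mk] at h2 h3 ⊢
    omega

lemma filter_lt_sum {n M : ℕ} (h : M ≤ n + 1) (y : Fin (n+1) → ℝ) :
    ∑ j ∈ Finset.univ.filter (fun j : Fin (n+1) => (j : ℕ) < M), y j
      = ∑ j : Fin M, y (Fin.castLE h j) := by
  refine (Finset.sum_bij' (fun (j : Fin M) _ => Fin.castLE h j)
    (fun (j : Fin (n+1)) hj => ⟨(j : ℕ), by simpa using hj⟩) ?_ ?_ ?_ ?_ ?_).symm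
  · intro a _; simp
  · intro a ha; exact Finset.mem_univ _
  · intro a _; ext; simp
  · intro a _; ext; simp
  · intro a _; rfl

lemma sum_le_first {n : ℕ} (y : Fin (n+1) → ℝ) (hy : Antitone y) (S : Finset (Fin (n+1))) :
    ∑ i ∈ S, y i ≤ ∑ j ∈ Finset.univ.filter (fun j : Fin (n+1) => (j : ℕ) < S.card), y j := by
  have hcard : S.card ≤ n + 1 := le_trans (Finset.card_le_univ S) (by simp)
  rw [filter_lt_sum hcard y]
  have hS : S = Finset.image (fun j : Fin S.card => S.orderEmbOfFin rfl j) Finset.univ := by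
    ext a
    simp only [Finset.mem_image, Finset.mem_univ, true_and]
    constructor
    · intro ha
      have : a ∈ Set.range (S.orderEmbOfFin rfl) := by
        rw [Finset.range_orderEmbOfFin]; exact ha
      obtain ⟨j, hj⟩ := this; exact ⟨j, hj⟩
    · rintro ⟨j, rfl⟩; exact Finset.orderEmbOfFin_mem S rfl j
  have h' : ∑ i ∈ S, y i = ∑ j : Fin S.card, y (S.orderEmbOfFin rfl j) := by
    conv_lhs => rw [hS]
    rw [Finset.sum_image (fun a _ b _ hab => (S.orderEmbOfFin rfl).injective hab)]
  rw [h']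
  apply Finset.sum_le_sum
  intro j _
  apply hy
  have := strictMono_le_val _ (S.orderEmbOfFin rfl).strictMono j
  exact Fin.le_def.mpr (by simpa using this)


/-- inequality description of the permutohedron. -/
theorem permutohedron_eq_inequalities (n : ℕ) (y : Fin (n + 1) → ℝ) (hy : Antitone y) :
    permutohedron y =
      {x : Fin (n + 1) → ℝ |
        (∑ i, x i = ∑ i, y i) ∧
        ∀ T : Finset (Fin (n + 1)), T.Nonempty → T ≠ Finset.univ →
          ∑ i ∈ T, x i ≤
            ∑ j ∈ Finset.univ.filter (fun j : Fin (n + 1) => (j : ℕ) < T.card), y j} := by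
  set Q : Set (Fin (n+1) → ℝ) :=
      {x : Fin (n + 1) → ℝ |
        (∑ i, x i = ∑ i, y i) ∧
        ∀ T : Finset (Fin (n + 1)), T.Nonempty → T ≠ Finset.univ →
          ∑ i ∈ T, x i ≤
            ∑ j ∈ Finset.univ.filter (fun j : Fin (n + 1) => (j : ℕ) < T.card), y j} with hQ
  have hQconv : Convex ℝ Q := by
    intro x hx z hz a b ha hb hab
    constructor
    · have : ∑ i, (a • x + b • z) i = a * ∑ i, x i + b * ∑ i, z i := by
        simp [Finset.sum_add_distrib, Finset.mul_sum]
      rw [this, hx.1, hz.1, ← add_mul, hab, one_mul]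
    · intro T hT hTu
      have h1 := hx.2 T hT hTu
      have h2 := hz.2 T hT hTu
      have : ∑ i ∈ T, (a • x + b • z) i = a * ∑ i ∈ T, x i + b * ∑ i ∈ T, z i := by
        simp [Finset.sum_add_distrib, Finset.mul_sum]
      rw [this]
      calc a * ∑ i ∈ T, x i + b * ∑ i ∈ T, z i
          ≤ a * (∑ j ∈ Finset.univ.filter (fun j : Fin (n + 1) => (j : ℕ) < T.card), y j)
            + b * (∑ j ∈ Finset.univ.filter (fun j : Fin (n + 1) => (j : ℕ) < T.card), y j) :=
            add_le_add (mul_le_mul_of_nonneg_left h1 ha) (mul_le_mul_of_nonneg_left h2 hb)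
        _ = _ := by rw [← add_mul, hab, one_mul]
  have hVQ : {x | ∃ w : Equiv.Perm (Fin (n+1)), x = y ∘ w} ⊆ Q := by
    rintro _ ⟨w, rfl⟩
    constructor
    · exact Equiv.sum_comp w y
    · intro T hT hTu
      calc ∑ i ∈ T, (y ∘ w) i = ∑ i ∈ T.image w, y i := by
            rw [Finset.sum_image (fun a _ b _ hab => w.injective hab)]; rfl
        _ ≤ ∑ j ∈ Finset.univ.filter
              (fun j : Fin (n + 1) => (j : ℕ) < (T.image w).card), y j :=
            sum_le_first y hy _
        _ = _ := by rw [Finset.card_image_of_injective _ w.injective]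
  refine Set.Subset.antisymm (convexHull_min hVQ hQconv) ?_
  intro x hx
  by_contra hc
  -- the permutohedron is closed
  have hfin : {x : Fin (n+1) → ℝ | ∃ w : Equiv.Perm (Fin (n+1)), x = y ∘ w}.Finite := by
    have : {x : Fin (n+1) → ℝ | ∃ w : Equiv.Perm (Fin (n+1)), x = y ∘ w}
        = Set.range (fun w : Equiv.Perm (Fin (n+1)) => y ∘ w) := by
      ext z; simp [Set.range, eq_comm]
    rw [this]; exact Set.finite_range _
  have hclosed : IsClosed (permutohedron y) := (hfin.isCompact_convexHull ℝ).isClosed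
  obtain ⟨f, u, hfu, hux⟩ := geometric_hahn_banach_closed_point
    (convex_convexHull ℝ _) hclosed hc
  set c : Fin (n+1) → ℝ := fun i => f (fun j => if i = j then (1:ℝ) else 0) with hc'
  have hfc : ∀ z : Fin (n+1) → ℝ, f z = ∑ i, z i * c i := by
    intro z
    conv_lhs => rw [pi_eq_sum_univ z]
    rw [map_sum]
    simp only [_root_.map_smul, smul_eq_mul]
    rfl
  set σ : Equiv.Perm (Fin (n+1)) := Tuple.sort (-c) with hσ'
  have hanti : Antitone (fun i => c (σ i)) := by
    intro i j hij
    have := Tuple.monotone_sort (-c) hij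
    simp only [Function.comp_apply, Pi.neg_apply] at this
    simpa [hσ'] using by linarith [this]
  set A : ℕ → ℝ := fun j => if h : j < n+1 then x (σ ⟨j, h⟩) else 0 with hA
  set B : ℕ → ℝ := fun j => if h : j < n+1 then y ⟨j, h⟩ else 0 with hB
  set D : ℕ → ℝ := fun j => if h : j < n+1 then c (σ ⟨j, h⟩) else 0 with hD
  have hAval : ∀ (j : ℕ) (h : j < n+1), A j = x (σ ⟨j, h⟩) := fun j h => dif_pos h
  have hBval : ∀ (j : ℕ) (h : j < n+1), B j = y ⟨j, h⟩ := fun j h => dif_pos h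
  have hDval : ∀ (j : ℕ) (h : j < n+1), D j = c (σ ⟨j, h⟩) := fun j h => dif_pos h
  -- partial sums
  have hAfin : ∀ M (hM : M ≤ n+1), ∑ j ∈ Finset.range M, A j
      = ∑ j : Fin M, x (σ (Fin.castLE hM j)) := by
    intro M hM
    rw [← Fin.sum_univ_eq_sum_range A M]
    refine Finset.sum_congr rfl fun j _ => ?_
    rw [hAval j.val (lt_of_lt_of_le j.isLt hM)]
    rfl
  have hBfin : ∀ M (hM : M ≤ n+1), ∑ j ∈ Finset.range M, B j
      = ∑ j : Fin M, y (Fin.castLE hM j) := by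
    intro M hM
    rw [← Fin.sum_univ_eq_sum_range B M]
    refine Finset.sum_congr rfl fun j _ => ?_
    rw [hBval j.val (lt_of_lt_of_le j.isLt hM)]
    rfl
  have htotal : ∑ j ∈ Finset.range (n+1), A j = ∑ j ∈ Finset.range (n+1), B j := by
    rw [hAfin (n+1) le_rfl, hBfin (n+1) le_rfl]
    have h1 : ∑ j : Fin (n+1), x (σ (Fin.castLE le_rfl j)) = ∑ j, x (σ j) := by
      refine Finset.sum_congr rfl fun j _ => ?_
      congr 1
    have h2 : ∑ j : Fin (n+1), y (Fin.castLE le_rfl j) = ∑ j, y j := by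
      refine Finset.sum_congr rfl fun j _ => ?_
      congr 1
    rw [h1, h2, Equiv.sum_comp σ x]
    exact hx.1
  have hpartial : ∀ M, 1 ≤ M → M ≤ n + 1 →
      ∑ j ∈ Finset.range M, A j ≤ ∑ j ∈ Finset.range M, B j := by
    intro M h1M hM
    rcases eq_or_lt_of_le hM with rfl | hMlt
    · exact le_of_eq htotal
    have hMn : M ≤ n := by omega
    set T : Finset (Fin (n+1)) :=
      Finset.image (fun j : Fin M => σ (Fin.castLE hM j)) Finset.univ with hT'
    have hinj : Function.Injective (fun j : Fin M => σ (Fin.castLE hM j)) :=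
      fun a b hab => Fin.castLE_injective hM (σ.injective hab)
    have hTcard : T.card = M := by
      rw [hT', Finset.card_image_of_injective _ hinj, Finset.card_univ, Fintype.card_fin]
    have hTne : T.Nonempty := Finset.card_pos.mp (by omega)
    have hTu : T ≠ Finset.univ := by
      intro h
      have := Finset.card_univ (α := Fin (n+1))
      rw [h] at hTcard
      simp [Finset.card_univ] at hTcard
      omega
    have key := hx.2 T hTne hTu
    rw [hTcard] at key
    have hTsum : ∑ i ∈ T, x i = ∑ j : Fin M, x (σ (Fin.castLE hM j)) := by
      rw [hT', Finset.sum_image (fun a _ b _ hab => hinj hab)]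
    rw [hAfin M hM, hBfin M hM, ← hTsum, ← filter_lt_sum hM y]
    exact key
  -- Abel summation
  have hdm : ∀ k, k < n → D (k+1) ≤ D k := by
    intro k hk
    rw [hDval (k+1) (by omega), hDval k (by omega)]
    exact hanti (by simp [Fin.le_def])
  have habel := abel_aux D (fun j => B j - A j) n hdm ?_
  · have hzero : ∑ j ∈ Finset.range (n+1), (B j - A j) = 0 := by
      rw [Finset.sum_sub_distrib, htotal]; ring
    rw [hzero, mul_zero] at habel
    have hDA : ∑ j ∈ Finset.range (n+1), D j * (B j - A j)
        = ∑ j ∈ Finset.range (n+1), D j * B j - ∑ j ∈ Finset.range (n+1), D j * A j := by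
      rw [← Finset.sum_sub_distrib]; congr 1; ext j; ring
    rw [hDA] at habel
    -- identify f x and f ((fun i => y (σ⁻¹ i)))
    have hfx : f x = ∑ j ∈ Finset.range (n+1), D j * A j := by
      rw [hfc x, ← Equiv.sum_comp σ (fun i => x i * c i)]
      rw [← Fin.sum_univ_eq_sum_range (fun j => D j * A j) (n+1)]
      refine Finset.sum_congr rfl fun j _ => ?_
      rw [hAval j.val j.isLt, hDval j.val j.isLt]
      simp only [Fin.eta]
      ring
    have hfy : f ((fun i => y (σ⁻¹ i))) = ∑ j ∈ Finset.range (n+1), D j * B j := by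
      rw [hfc ((fun i => y (σ⁻¹ i))), ← Equiv.sum_comp σ (fun i => ((fun i => y (σ⁻¹ i))) i * c i)]
      rw [← Fin.sum_univ_eq_sum_range (fun j => D j * B j) (n+1)]
      refine Finset.sum_congr rfl fun j _ => ?_
      rw [hBval j.val j.isLt, hDval j.val j.isLt]
      simp only [Fin.eta, Equiv.Perm.inv_def, Equiv.symm_apply_apply]
      ring
    have hymem : ((fun i => y (σ⁻¹ i))) ∈ permutohedron y :=
      subset_convexHull ℝ _ ⟨σ⁻¹, rfl⟩
    have := hfu _ hymem
    rw [hfy] at this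
    rw [hfx] at hux
    linarith
  · intro M h1M hM
    have := hpartial M h1M hM
    rw [Finset.sum_sub_distrib]
    linarith


end MixedEulerian
end

section
/- For nonnegative real numbers λ_1,...,λ_n, the Minkowski sum λ_1 Δ_{1,n} + λ_2 Δ_{2,n} + ... + λ_n Δ_{n,n} equals the permutohedron P(λ_1+...+λ_n, λ_2+...+λ_n, ..., λ_n, 0). -/
open scoped Pointwise
open MeasureTheory Nat

namespace MixedEulerian

lemma comp_mem_permutohedron {m : ℕ} (y : Fin m → ℝ) {x : Fin m → ℝ}
    (hx : x ∈ permutohedron y) (σ : Equiv.Perm (Fin m)) : x ∘ ⇑σ ∈ permutohedron y := by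
  have himg := (LinearMap.funLeft ℝ ℝ ⇑σ).image_convexHull
    {x : Fin m → ℝ | ∃ w : Equiv.Perm (Fin m), x = y ∘ w}
  have hmem : x ∘ ⇑σ ∈ LinearMap.funLeft ℝ ℝ ⇑σ ''
      convexHull ℝ {x : Fin m → ℝ | ∃ w : Equiv.Perm (Fin m), x = y ∘ w} :=
    ⟨x, hx, rfl⟩
  rw [himg] at hmem
  refine convexHull_min ?_ (convex_convexHull ℝ _) hmem
  rintro z ⟨z', ⟨w, rfl⟩, rfl⟩
  refine subset_convexHull ℝ _ ⟨w * σ, ?_⟩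
  rfl

lemma add_comp_mem {m : ℕ} {a b : Fin m → ℝ} (ha : Antitone a) (hb : Antitone b)
    (τ : Equiv.Perm (Fin m)) : a + b ∘ ⇑τ ∈ permutohedron (a + b) := by
  classical
  set P := permutohedron (a + b) with hP
  let S : Equiv.Perm (Fin m) → ℝ := fun ρ => ∑ x, a x * b (ρ x)
  let meas : Equiv.Perm (Fin m) → ℕ :=
    fun ρ => (Finset.univ.filter (fun ρ' => S ρ < S ρ')).card
  suffices h : ∀ (N : ℕ) (τ : Equiv.Perm (Fin m)), meas τ < N → a + b ∘ ⇑τ ∈ P from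
    h (meas τ + 1) τ (Nat.lt_succ_self _)
  intro N
  induction N with
  | zero => exact fun τ h => absurd h (Nat.not_lt_zero _)
  | succ N ih =>
    intro τ hτ
    by_cases hbad : ∃ s t, a s < a t ∧ b (τ t) < b (τ s)
    · obtain ⟨s, t, hst1, hst2⟩ := hbad
      have hne : s ≠ t := by rintro rfl; exact lt_irrefl _ hst1
      set τ' := τ * Equiv.swap s t with hτ'
      have hτ's : τ' s = τ t := by
        simp [hτ', Equiv.Perm.mul_apply, Equiv.swap_apply_left]
      have hτ't : τ' t = τ s := by
        simp [hτ', Equiv.Perm.mul_apply, Equiv.swap_apply_right]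
      have hS : S τ' - S τ = (a s * b (τ t) - a s * b (τ s)) + (a t * b (τ s) - a t * b (τ t)) := by
        have h2 : S τ' - S τ = ∑ x, (a x * b (τ' x) - a x * b (τ x)) := by
          rw [Finset.sum_sub_distrib]
        have h3 : ∑ x, (a x * b (τ' x) - a x * b (τ x))
            = ∑ x ∈ ({s, t} : Finset (Fin m)), (a x * b (τ' x) - a x * b (τ x)) := by
          refine (Finset.sum_subset (Finset.subset_univ _) ?_).symm
          intro x _ hx
          simp only [Finset.mem_insert, Finset.mem_singleton, not_or] at hx
          have hτx : τ' x = τ x := by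
            simp [hτ', Equiv.Perm.mul_apply, Equiv.swap_apply_of_ne_of_ne hx.1 hx.2]
          rw [hτx]; ring
        rw [h2, h3, Finset.sum_pair hne, hτ's, hτ't]
      have hlt : S τ < S τ' := by nlinarith [mul_pos (sub_pos.2 hst1) (sub_pos.2 hst2)]
      have hmeas : meas τ' < meas τ := by
        apply Finset.card_lt_card
        rw [Finset.ssubset_iff_of_subset]
        · exact ⟨τ', by simp [meas, hlt], by simp [meas]⟩
        · intro ρ hρ
          simp only [meas, Finset.mem_filter, Finset.mem_univ, true_and] at hρ ⊢
          exact hlt.trans hρ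
      have h1 : a + b ∘ ⇑τ' ∈ P := ih τ' (by omega)
      have h2 : (a + b ∘ ⇑τ') ∘ ⇑(Equiv.swap s t) ∈ P := comp_mem_permutohedron _ h1 _
      set d1 := a t - a s with hd1
      set d2 := b (τ s) - b (τ t) with hd2
      have hd1p : 0 < d1 := sub_pos.2 hst1
      have hd2p : 0 < d2 := sub_pos.2 hst2
      have hdp : 0 < d1 + d2 := by linarith
      have hcomb : a + b ∘ ⇑τ
          = (d1 / (d1 + d2)) • (a + b ∘ ⇑τ')
            + (d2 / (d1 + d2)) • ((a + b ∘ ⇑τ') ∘ ⇑(Equiv.swap s t)) := by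
        funext r
        simp only [Pi.add_apply, Pi.smul_apply, smul_eq_mul, Function.comp_apply]
        rcases eq_or_ne r s with rfl | hrs
        · rw [Equiv.swap_apply_left, hτ's, hτ't]
          field_simp
          ring
        rcases eq_or_ne r t with rfl | hrt
        · rw [Equiv.swap_apply_right, hτ's, hτ't]
          field_simp
          ring
        · rw [Equiv.swap_apply_of_ne_of_ne hrs hrt]
          have hτr : τ' r = τ r := by
            simp [hτ', Equiv.Perm.mul_apply, Equiv.swap_apply_of_ne_of_ne hrs hrt]
          rw [hτr]
          field_simp
      rw [hcomb]
      exact convex_convexHull ℝ _ h1 h2 (by positivity) (by positivity)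
        (by field_simp)
    · push_neg at hbad
      have hgood : ∀ s t, a s < a t → b (τ s) ≤ b (τ t) := hbad
      set v : Fin m → ℝ := b ∘ ⇑τ with hv
      let g : Fin m → Lex (ℝ × ℝ) := fun x => toLex (-(a x), -(v x))
      set ρ := Tuple.sort g with hρ
      have hmono : Monotone (g ∘ ⇑ρ) := Tuple.monotone_sort g
      have ha' : Monotone (fun i => -(a (ρ i))) := by
        intro i j hij
        have := hmono hij
        rcases Prod.Lex.le_iff.1 this with h | h
        · exact le_of_lt h
        · exact le_of_eq h.1
      have hv' : Monotone (fun i => -(v (ρ i))) := by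
        intro i j hij
        have := hmono hij
        rcases Prod.Lex.le_iff.1 this with h | h
        · have haij : a (ρ j) < a (ρ i) := by
            have : -(a (ρ i)) < -(a (ρ j)) := h
            linarith
          have := hgood (ρ j) (ρ i) haij
          simpa [hv] using neg_le_neg this
        · exact h.2
      have haρ : ∀ i, a (ρ i) = a i := by
        have hm1 : Monotone ((fun i => -(a i)) ∘ ⇑ρ) := ha'
        have hm2 : Monotone ((fun i => -(a i)) ∘ ⇑(1 : Equiv.Perm (Fin m))) := by
          intro i j hij
          exact neg_le_neg (ha hij)
        have := Tuple.unique_monotone hm1 hm2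
        intro i
        have := congrFun this i
        simpa using this
      have hvρ : ∀ i, v (ρ i) = b i := by
        have hm1 : Monotone ((fun i => -(b i)) ∘ ⇑(τ * ρ)) := by
          intro i j hij
          have := hv' hij
          simpa [hv, Equiv.Perm.mul_apply] using this
        have hm2 : Monotone ((fun i => -(b i)) ∘ ⇑(1 : Equiv.Perm (Fin m))) := by
          intro i j hij
          exact neg_le_neg (hb hij)
        have := Tuple.unique_monotone hm1 hm2
        intro i
        have := congrFun this i
        simp only [Function.comp_apply, Equiv.Perm.mul_apply, Equiv.Perm.coe_one, id] at this
        have := neg_injective this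
        simpa [hv] using this
      have hkey : a + b ∘ ⇑τ = (a + b) ∘ ⇑(ρ⁻¹) := by
        funext x
        have h1 : a (ρ (ρ⁻¹ x)) = a (ρ⁻¹ x) := haρ _
        have h2 : v (ρ (ρ⁻¹ x)) = b (ρ⁻¹ x) := hvρ _
        simp only [← Equiv.Perm.mul_apply, mul_inv_cancel, Equiv.Perm.one_apply] at h1 h2
        simp only [hv, Function.comp_apply] at h2
        simp only [Pi.add_apply, Function.comp_apply]
        rw [h1, h2]
      rw [hkey]
      exact subset_convexHull ℝ _ ⟨ρ⁻¹, rfl⟩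


lemma permutohedron_add {m : ℕ} {a b : Fin m → ℝ} (ha : Antitone a) (hb : Antitone b) :
    permutohedron a + permutohedron b = permutohedron (a + b) := by
  apply Set.Subset.antisymm
  · rw [permutohedron, permutohedron, ← convexHull_add]
    refine convexHull_min ?_ (convex_convexHull ℝ _)
    rintro x hx
    rw [Set.mem_add] at hx
    obtain ⟨x1, ⟨σ, rfl⟩, x2, ⟨τ, rfl⟩, rfl⟩ := hx
    have key := add_comp_mem ha hb (τ * σ⁻¹)
    have h2 := comp_mem_permutohedron _ key σ
    have heq : a ∘ ⇑σ + b ∘ ⇑τ = (a + b ∘ ⇑(τ * σ⁻¹)) ∘ ⇑σ := by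
      funext x
      simp [Equiv.Perm.mul_apply]
    rw [heq]
    exact h2
  · refine convexHull_min ?_ ((convex_convexHull ℝ _).add (convex_convexHull ℝ _))
    rintro x ⟨w, rfl⟩
    have : (a + b) ∘ ⇑w = a ∘ ⇑w + b ∘ ⇑w := rfl
    rw [this]
    exact Set.add_mem_add (subset_convexHull ℝ _ ⟨w, rfl⟩) (subset_convexHull ℝ _ ⟨w, rfl⟩)

def eVec (n k : ℕ) : Fin (n + 1) → ℝ := fun j => if (j : ℕ) < k then 1 else 0

lemma antitone_eVec (n k : ℕ) : Antitone (eVec n k) := by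
  intro i j hij
  have hij' : (i : ℕ) ≤ (j : ℕ) := hij
  unfold eVec
  split_ifs with h1 h2 h2 <;> norm_num <;> omega

lemma smul_permutohedron {m : ℕ} (c : ℝ) (y : Fin m → ℝ) :
    c • permutohedron y = permutohedron (c • y) := by
  unfold permutohedron
  rw [← convexHull_smul]
  congr 1
  ext x
  constructor
  · rintro ⟨x', ⟨w, rfl⟩, rfl⟩
    exact ⟨w, rfl⟩
  · rintro ⟨w, rfl⟩
    exact ⟨y ∘ ⇑w, ⟨w, rfl⟩, rfl⟩

lemma hypersimplex_eq (n k : ℕ) (hk : k ≤ n + 1) :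
    hypersimplex n k = permutohedron (eVec n k) := by
  classical
  unfold hypersimplex permutohedron
  congr 1
  have hS : (Finset.univ.filter fun j : Fin (n + 1) => (j : ℕ) < k).card = k := by
    have : (Finset.univ.filter fun j : Fin (n + 1) => (j : ℕ) < k)
        = Finset.map (Fin.castLEEmb hk) Finset.univ := by
      ext j
      simp only [Finset.mem_filter, Finset.mem_univ, true_and, Finset.mem_map,
        Fin.castLEEmb_apply]
      constructor
      · intro h
        exact ⟨⟨(j : ℕ), h⟩, by ext; simp⟩
      · rintro ⟨i, rfl⟩
        simpa using i.isLt
    rw [this, Finset.card_map, Finset.card_univ, Fintype.card_fin]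
  set S := Finset.univ.filter fun j : Fin (n + 1) => (j : ℕ) < k with hSdef
  ext x
  constructor
  · rintro ⟨T, hT, rfl⟩
    have hc : T.card = S.card := by rw [hT, hS]
    have hcc : Tᶜ.card = Sᶜ.card := by
      rw [Finset.card_compl, Finset.card_compl, hc]
    let e₁ : {x // x ∈ T} ≃ {x // x ∈ S} := Finset.equivOfCardEq hc
    let e₂ : {x // ¬ x ∈ T} ≃ {x // ¬ x ∈ S} :=
      ((Equiv.subtypeEquivRight fun x => (Finset.mem_compl (s := T))).symm.trans
        (Finset.equivOfCardEq hcc)).trans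
        (Equiv.subtypeEquivRight fun x => (Finset.mem_compl (s := S)))
    let w : Equiv.Perm (Fin (n + 1)) :=
      (Equiv.sumCompl (· ∈ T)).symm.trans ((e₁.sumCongr e₂).trans (Equiv.sumCompl (· ∈ S)))
    have hw : ∀ j, j ∈ T ↔ w j ∈ S := by
      intro j
      by_cases hj : j ∈ T
      · simp only [w, Equiv.trans_apply, Equiv.sumCompl_symm_apply_of_pos hj,
          Equiv.sumCongr_apply, Sum.map_inl, Equiv.sumCompl_apply_inl]
        exact iff_of_true hj (e₁ ⟨j, hj⟩).2
      · simp only [w, Equiv.trans_apply, Equiv.sumCompl_symm_apply_of_neg hj,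
          Equiv.sumCongr_apply, Sum.map_inr, Equiv.sumCompl_apply_inr]
        exact iff_of_false hj (e₂ ⟨j, hj⟩).2
    refine ⟨w, ?_⟩
    funext j
    have := hw j
    simp only [hSdef, Finset.mem_filter, Finset.mem_univ, true_and] at this
    simp only [Function.comp_apply, eVec]
    exact if_congr this rfl rfl
  · rintro ⟨w, rfl⟩
    refine ⟨S.map w.symm.toEmbedding, by rw [Finset.card_map, hS], ?_⟩
    funext j
    have hmem : j ∈ S.map w.symm.toEmbedding ↔ w j ∈ S := by
      simp only [Finset.mem_map, Equiv.coe_toEmbedding]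
      constructor
      · rintro ⟨s, hs, rfl⟩
        simpa using hs
      · intro h
        exact ⟨w j, h, by simp⟩
    simp only [Function.comp_apply, eVec]
    have h3 : ((w j : ℕ) < k) ↔ j ∈ S.map w.symm.toEmbedding := by
      rw [hmem]
      simp [hSdef]
    exact if_congr h3 rfl rfl

lemma antitone_smul_eVec {n : ℕ} {c : ℝ} (hc : 0 ≤ c) (k : ℕ) :
    Antitone (c • eVec n k) := by
  intro i j hij
  simp only [Pi.smul_apply, smul_eq_mul]
  exact mul_le_mul_of_nonneg_left (antitone_eVec n k hij) hc

lemma sum_hyper_eq (n : ℕ) (lam : Fin n → ℝ) (hlam : ∀ i, 0 ≤ lam i) (s : Finset (Fin n)) :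
    ∑ i ∈ s, lam i • hypersimplex n ((i : ℕ) + 1)
      = permutohedron (∑ i ∈ s, lam i • eVec n ((i : ℕ) + 1)) := by
  classical
  induction s using Finset.induction_on with
  | empty =>
    rw [Finset.sum_empty, Finset.sum_empty]
    have h0 : {x : Fin (n + 1) → ℝ | ∃ w : Equiv.Perm (Fin (n + 1)),
        x = (0 : Fin (n + 1) → ℝ) ∘ w} = {0} := by
      ext x
      constructor
      · rintro ⟨w, rfl⟩; rfl
      · rintro rfl; exact ⟨Equiv.refl _, rfl⟩
    rw [permutohedron, h0, convexHull_singleton]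
    rfl
  | @insert a s hns ih =>
    rw [Finset.sum_insert hns, Finset.sum_insert hns, ih,
      hypersimplex_eq n ((a : ℕ) + 1) (by omega),
      smul_permutohedron]
    refine permutohedron_add (antitone_smul_eVec (hlam a) _) ?_
    intro i j hij
    rw [Finset.sum_apply, Finset.sum_apply]
    exact Finset.sum_le_sum fun k _ => antitone_smul_eVec (hlam k) ((k : ℕ) + 1) hij


/-- `λ₁Δ_{1,n} + ⋯ + λ_nΔ_{n,n} = P(λ₁+⋯+λ_n, λ₂+⋯+λ_n, …, λ_n, 0)`. -/
theorem minkowski_sum_hypersimplices (n : ℕ) (lam : Fin n → ℝ) (hlam : ∀ i, 0 ≤ lam i) :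
    ∑ i : Fin n, lam i • hypersimplex n ((i : ℕ) + 1) =
      permutohedron (fun j : Fin (n + 1) =>
        ∑ i ∈ Finset.univ.filter (fun i : Fin n => (j : ℕ) ≤ (i : ℕ)), lam i) := by
  have hvec : (fun j : Fin (n + 1) =>
      ∑ i ∈ Finset.univ.filter (fun i : Fin n => (j : ℕ) ≤ (i : ℕ)), lam i)
      = ∑ i : Fin n, lam i • eVec n ((i : ℕ) + 1) := by
    funext j
    rw [Finset.sum_apply, Finset.sum_filter]
    refine Finset.sum_congr rfl fun i _ => ?_
    simp only [Pi.smul_apply, smul_eq_mul, eVec, mul_ite, mul_one, mul_zero]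
    exact (if_congr (by omega) rfl rfl).symm
  rw [sum_hyper_eq n lam hlam Finset.univ, hvec]

end MixedEulerian
end

section
/- For real numbers y_1 ≥ ... ≥ y_n ≥ 0, the signed permutohedron SP(y_1,...,y_n) equals the set of points (x_1,...,x_n) ∈ ℝ^n such that for every 1 ≤ k ≤ n and every k-element subset {i_1,...,i_k} ⊆ {1,...,n}, |x_{i_1}| + ... + |x_{i_k}| ≤ y_1 + ... + y_k. -/
open scoped Pointwise
open MeasureTheory Nat

namespace MixedEulerian

section AuxSP
open Finset

private lemma auxSP_le_apply {k n : ℕ} {f : Fin k → Fin n} (hf : StrictMono f) :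
    ∀ j (h : j < k), j ≤ (f ⟨j, h⟩ : ℕ) := by
  intro j
  induction j with
  | zero => intro h; exact Nat.zero_le _
  | succ j ih =>
    intro h
    have h' : j < k := Nat.lt_of_succ_lt h
    have h1 : f ⟨j, h'⟩ < f ⟨j + 1, h⟩ := hf (by simp [Fin.lt_def])
    have h2 := ih h'
    have h3 : (f ⟨j, h'⟩ : ℕ) < (f ⟨j + 1, h⟩ : ℕ) := h1
    omega

private lemma auxSP_sum_filter_lt_eq {n m : ℕ} (hm : m ≤ n) (g : Fin n → ℝ) :
    ∑ j ∈ Finset.univ.filter (fun j : Fin n => (j : ℕ) < m), g j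
      = ∑ i : Fin m, g (Fin.castLE hm i) := by
  have himg : Finset.univ.filter (fun j : Fin n => (j : ℕ) < m)
      = Finset.image (Fin.castLE hm) Finset.univ := by
    ext j
    simp only [mem_filter, mem_univ, true_and, mem_image]
    constructor
    · intro hj; exact ⟨⟨j, hj⟩, rfl⟩
    · rintro ⟨i, rfl⟩; exact i.isLt
  rw [himg, Finset.sum_image (by intro i _ j _ hij; exact Fin.castLE_injective hm hij)]

private lemma auxSP_sum_le_topk {n : ℕ} {y : Fin n → ℝ} (hy : Antitone y) (S : Finset (Fin n)) :
    ∑ i ∈ S, y i ≤ ∑ j ∈ Finset.univ.filter (fun j : Fin n => (j : ℕ) < S.card), y j := by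
  have hcard : S.card ≤ n := by simpa using Finset.card_le_univ S
  rw [auxSP_sum_filter_lt_eq hcard]
  have hS : S = Finset.image (S.orderEmbOfFin rfl) Finset.univ := by
    ext j
    simp only [mem_image, mem_univ, true_and]
    constructor
    · intro hj
      have : j ∈ Set.range (S.orderEmbOfFin rfl) := by
        rw [Finset.range_orderEmbOfFin]; exact hj
      exact this
    · rintro ⟨i, rfl⟩; exact Finset.orderEmbOfFin_mem S rfl i
  have hsum : ∑ i ∈ S, y i = ∑ i : Fin S.card, y (S.orderEmbOfFin rfl i) := by
    conv_lhs => rw [hS]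
    rw [Finset.sum_image (by intro i _ j _ hij; exact (S.orderEmbOfFin rfl).injective hij)]
  rw [hsum]
  apply Finset.sum_le_sum
  intro i _
  apply hy
  rw [Fin.le_def]
  exact auxSP_le_apply (S.orderEmbOfFin rfl).strictMono i i.isLt

private lemma auxSP_abel_nonneg (a d : ℕ → ℝ) (N : ℕ) (ha : Antitone a) (ha0 : ∀ i, 0 ≤ a i)
    (hD : ∀ k, 0 ≤ ∑ i ∈ Finset.range k, d i) :
    0 ≤ ∑ i ∈ Finset.range N, a i * d i := by
  have h := Finset.sum_range_by_parts a d N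
  simp only [smul_eq_mul] at h
  rw [h]
  have h1 : 0 ≤ a (N - 1) * ∑ i ∈ range N, d i :=
    mul_nonneg (ha0 _) (hD N)
  have h2 : ∑ i ∈ range (N - 1), (a (i + 1) - a i) * ∑ j ∈ range (i + 1), d j ≤ 0 := by
    apply Finset.sum_nonpos
    intro i _
    apply mul_nonpos_of_nonpos_of_nonneg
    · simp only [sub_nonpos]; exact ha (Nat.le_succ i)
    · exact hD _
  linarith

end AuxSP

/-- inequality description of the signed permutohedron. -/
theorem signedPermutohedron_eq_inequalities (n : ℕ) (y : Fin n → ℝ)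
    (hy : Antitone y) (hy0 : ∀ i, 0 ≤ y i) :
    signedPermutohedron y =
      {x : Fin n → ℝ | ∀ T : Finset (Fin n), T.Nonempty →
        ∑ i ∈ T, |x i| ≤
          ∑ j ∈ Finset.univ.filter (fun j : Fin n => (j : ℕ) < T.card), y j} := by
  classical
  unfold signedPermutohedron
  set V : Set (Fin n → ℝ) := {x : Fin n → ℝ | ∃ w : Equiv.Perm (Fin n), ∃ ε : Fin n → ℝ,
      (∀ i, ε i = 1 ∨ ε i = -1) ∧ x = fun i => ε i * y (w i)} with hVdef
  apply Set.Subset.antisymm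
  · apply convexHull_min
    · rintro v ⟨w, ε, hε, rfl⟩
      simp only [Set.mem_setOf_eq]
      intro T hT
      have h1 : ∀ i, |ε i * y (w i)| = y (w i) := by
        intro i
        rcases hε i with h | h <;> simp [h, abs_mul, abs_of_nonneg (hy0 _)]
      have h2 : ∑ i ∈ T, |ε i * y (w i)| = ∑ i ∈ T.image w, y i := by
        rw [Finset.sum_image (by intro i _ j _ hij; exact w.injective hij)]
        exact Finset.sum_congr rfl fun i _ => h1 i
      calc ∑ i ∈ T, |ε i * y (w i)| = ∑ i ∈ T.image w, y i := h2
        _ ≤ ∑ j ∈ Finset.univ.filter (fun j : Fin n => (j : ℕ) < (T.image w).card), y j :=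
            auxSP_sum_le_topk hy _
        _ = ∑ j ∈ Finset.univ.filter (fun j : Fin n => (j : ℕ) < T.card), y j := by
            rw [Finset.card_image_of_injective _ w.injective]
    · intro p hp q hq aa bb ha hb hab
      simp only [Set.mem_setOf_eq] at hp hq ⊢
      intro T hT
      have key : ∑ i ∈ T, |(aa • p + bb • q) i|
          ≤ aa * ∑ i ∈ T, |p i| + bb * ∑ i ∈ T, |q i| := by
        rw [Finset.mul_sum, Finset.mul_sum, ← Finset.sum_add_distrib]
        apply Finset.sum_le_sum
        intro i _
        simp only [Pi.add_apply, Pi.smul_apply, smul_eq_mul]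
        calc |aa * p i + bb * q i| ≤ |aa * p i| + |bb * q i| := abs_add_le _ _
          _ = aa * |p i| + bb * |q i| := by
              rw [abs_mul, abs_mul, abs_of_nonneg ha, abs_of_nonneg hb]
      have h1 := mul_le_mul_of_nonneg_left (hp T hT) ha
      have h2 := mul_le_mul_of_nonneg_left (hq T hT) hb
      have h3 : (aa + bb) * ∑ j ∈ Finset.univ.filter (fun j : Fin n => (j : ℕ) < T.card), y j
          = ∑ j ∈ Finset.univ.filter (fun j : Fin n => (j : ℕ) < T.card), y j := by
        rw [hab, one_mul]
      calc ∑ i ∈ T, |(aa • p + bb • q) i| ≤ aa * ∑ i ∈ T, |p i| + bb * ∑ i ∈ T, |q i| := key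
        _ ≤ (aa + bb) * ∑ j ∈ Finset.univ.filter (fun j : Fin n => (j : ℕ) < T.card), y j := by
            rw [add_mul]; exact add_le_add h1 h2
        _ = _ := h3
  · intro x hx
    by_contra hxK
    simp only [Set.mem_setOf_eq] at hx
    have hVfin : V.Finite := by
      apply Set.Finite.subset (Set.finite_range (fun p : Equiv.Perm (Fin n) × (Fin n → Bool) =>
        fun i => (if p.2 i then (1:ℝ) else -1) * y (p.1 i)))
      rintro v ⟨w, ε, hε, rfl⟩
      refine ⟨(w, fun i => decide (ε i = 1)), ?_⟩
      funext i
      rcases hε i with h | h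
      · simp [h]
      · have hne : ¬ (ε i = 1) := by rw [h]; norm_num
        simp [h, hne]
        intro hcon
        norm_num at hcon
    obtain ⟨f, u, hfu, hux⟩ := geometric_hahn_banach_closed_point
      (convex_convexHull ℝ V) (hVfin.isClosed_convexHull (𝕜 := ℝ)) hxK
    set c : Fin n → ℝ := fun i => f (fun j => if i = j then (1:ℝ) else 0) with hc
    have hf : ∀ z : Fin n → ℝ, f z = ∑ i, z i * c i := by
      intro z
      conv_lhs => rw [pi_eq_sum_univ z]
      rw [map_sum]
      exact Finset.sum_congr rfl fun i _ => by rw [_root_.map_smul, smul_eq_mul]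
    set σ : Equiv.Perm (Fin n) := Tuple.sort (fun i => -|c i|) with hσ
    have hamono : Antitone fun i => |c (σ i)| := by
      intro i j hij
      have h := Tuple.monotone_sort (fun i => -|c i|) hij
      simp only [Function.comp_apply] at h
      dsimp only
      linarith
    set A : ℕ → ℝ := fun i => if h : i < n then |c (σ ⟨i, h⟩)| else 0 with hA
    set B : ℕ → ℝ := fun i => if h : i < n then |x (σ ⟨i, h⟩)| else 0 with hB
    set Y : ℕ → ℝ := fun i => if h : i < n then y ⟨i, h⟩ else 0 with hYd
    have hA0 : ∀ i, 0 ≤ A i := by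
      intro i; simp only [hA]
      split
      · exact abs_nonneg _
      · exact le_refl 0
    have hAmono : Antitone A := by
      intro i j hij
      by_cases hj : j < n
      · have hi : i < n := lt_of_le_of_lt hij hj
        simp only [hA, dif_pos hi, dif_pos hj]
        exact hamono (show (⟨i, hi⟩ : Fin n) ≤ ⟨j, hj⟩ from hij)
      · simp only [hA, dif_neg hj]
        exact hA0 i
    have hBY : ∀ k, ∑ i ∈ Finset.range k, B i ≤ ∑ i ∈ Finset.range k, Y i := by
      intro k
      set m := min k n with hm
      have hmk : m ≤ k := min_le_left _ _
      have hmn : m ≤ n := min_le_right _ _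
      have hBtrunc : ∑ i ∈ Finset.range k, B i = ∑ i ∈ Finset.range m, B i := by
        symm; apply Finset.sum_subset (Finset.range_subset_range.2 hmk)
        intro i hik him
        simp only [Finset.mem_range] at hik him
        have hni : ¬ i < n := by omega
        simp [hB, hni]
      have hYtrunc : ∑ i ∈ Finset.range k, Y i = ∑ i ∈ Finset.range m, Y i := by
        symm; apply Finset.sum_subset (Finset.range_subset_range.2 hmk)
        intro i hik him
        simp only [Finset.mem_range] at hik him
        have hni : ¬ i < n := by omega
        simp [hYd, hni]
      rw [hBtrunc, hYtrunc]
      rcases Nat.eq_zero_or_pos m with h0 | h0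
      · simp [h0]
      · set T : Finset (Fin n) := Finset.image (fun i : Fin m => σ (Fin.castLE hmn i))
          Finset.univ with hT
        have hinj : Function.Injective (fun i : Fin m => σ (Fin.castLE hmn i)) :=
          fun i j hij => Fin.castLE_injective hmn (σ.injective hij)
        have hTcard : T.card = m := by
          rw [hT, Finset.card_image_of_injective _ hinj, Finset.card_univ, Fintype.card_fin]
        have hTne : T.Nonempty := by
          rw [← Finset.card_pos, hTcard]; exact h0
        have hmain := hx T hTne
        rw [hTcard] at hmain
        have hL : ∑ i ∈ T, |x i| = ∑ i ∈ Finset.range m, B i := by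
          rw [hT, Finset.sum_image (fun i _ j _ hij => hinj hij), Finset.sum_range]
          apply Finset.sum_congr rfl
          intro i _
          simp only [hB]
          rw [dif_pos (lt_of_lt_of_le i.isLt hmn)]
          rfl
        have hR : ∑ j ∈ Finset.univ.filter (fun j : Fin n => (j : ℕ) < m), y j
            = ∑ i ∈ Finset.range m, Y i := by
          rw [auxSP_sum_filter_lt_eq hmn y, Finset.sum_range]
          apply Finset.sum_congr rfl
          intro i _
          simp only [hYd]
          rw [dif_pos (lt_of_lt_of_le i.isLt hmn)]
          rfl
        rw [← hL, ← hR]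
        exact hmain
    have habel : ∑ i ∈ Finset.range n, A i * B i ≤ ∑ i ∈ Finset.range n, A i * Y i := by
      have h := auxSP_abel_nonneg A (fun i => Y i - B i) n hAmono hA0 (fun k => by
        have h1 := hBY k
        rw [Finset.sum_sub_distrib]
        linarith)
      have hsplit : ∑ i ∈ Finset.range n, A i * (Y i - B i)
          = ∑ i ∈ Finset.range n, A i * Y i - ∑ i ∈ Finset.range n, A i * B i := by
        rw [← Finset.sum_sub_distrib]
        exact Finset.sum_congr rfl fun i _ => by ring
      rw [hsplit] at h
      linarith
    have hfx : f x ≤ ∑ i ∈ Finset.range n, A i * B i := by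
      rw [hf x]
      have h2 : ∑ i, x i * c i ≤ ∑ i : Fin n, |x i| * |c i| :=
        Finset.sum_le_sum fun i _ => by
          calc x i * c i ≤ |x i * c i| := le_abs_self _
            _ = |x i| * |c i| := abs_mul _ _
      have h3 : ∑ i : Fin n, |x i| * |c i| = ∑ i : Fin n, |x (σ i)| * |c (σ i)| :=
        (Equiv.sum_comp σ (fun i => |x i| * |c i|)).symm
      have h4 : ∑ i ∈ Finset.range n, A i * B i = ∑ i : Fin n, |x (σ i)| * |c (σ i)| := by
        rw [Finset.sum_range]
        apply Finset.sum_congr rfl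
        intro i _
        simp only [hA, hB, dif_pos i.isLt, Fin.eta]
        ring
      rw [h4]
      linarith
    have hAY : ∑ i ∈ Finset.range n, A i * Y i = ∑ i : Fin n, |c (σ i)| * y i := by
      rw [Finset.sum_range]
      apply Finset.sum_congr rfl
      intro i _
      simp only [hA, hYd, dif_pos i.isLt, Fin.eta]
    set ε : Fin n → ℝ := fun i => if 0 ≤ c i then 1 else -1 with hε
    set v : Fin n → ℝ := fun i => ε i * y (σ.symm i) with hv
    have hvV : v ∈ V :=
      ⟨σ.symm, ε, fun i => by by_cases h : 0 ≤ c i <;> simp [hε, h], rfl⟩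
    have hεc : ∀ i, ε i * c i = |c i| := by
      intro i; by_cases h : 0 ≤ c i
      · simp [hε, h, abs_of_nonneg h]
      · simp only [hε, if_neg h]
        rw [abs_of_neg (lt_of_not_ge h)]
        ring
    have hfv : f v = ∑ i : Fin n, |c (σ i)| * y i := by
      rw [hf v]
      have h1 : ∀ i, v i * c i = |c i| * y (σ.symm i) := by
        intro i; simp only [hv]; rw [← hεc i]; ring
      rw [Finset.sum_congr rfl fun i _ => h1 i,
        ← Equiv.sum_comp σ (fun i => |c i| * y (σ.symm i))]
      exact Finset.sum_congr rfl fun i _ => by rw [Equiv.symm_apply_apply]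
    have hcontr := hfu v (subset_convexHull ℝ V hvV)
    rw [hfv, ← hAY] at hcontr
    linarith


end MixedEulerian
end

section
/- For nonnegative real numbers λ_1,...,λ_n, the Minkowski sum λ_1 Γ_{1,n} + λ_2 Γ_{2,n} + ... + λ_n Γ_{n,n} equals the signed permutohedron SP(λ_1+...+λ_n, λ_2+...+λ_n, ..., λ_n). -/
open scoped Pointwise
open MeasureTheory Nat

set_option maxRecDepth 8000

namespace MixedEulerian

private lemma fin_strictMono_le_aux {k : ℕ} {h : Fin k → ℕ} (hm : StrictMono h) :
    ∀ m (hmk : m < k), m ≤ h ⟨m, hmk⟩ := by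
  intro m
  induction m with
  | zero => intro _; exact Nat.zero_le _
  | succ p ih =>
      intro hmk
      have hp : p < k := by omega
      have h1 : (⟨p, hp⟩ : Fin k) < ⟨p + 1, hmk⟩ := by simp [Fin.lt_def]
      have h2 := hm h1
      have h3 := ih hp
      omega

private lemma fin_strictMono_le {k : ℕ} {h : Fin k → ℕ} (hm : StrictMono h) (j : Fin k) :
    (j : ℕ) ≤ h j := by
  obtain ⟨m, hmk⟩ := j
  exact fin_strictMono_le_aux hm m hmk

private lemma sum_antitone_le_topk {n : ℕ} (d : Fin n → ℝ)
    (hd : ∀ a b : Fin n, a ≤ b → d b ≤ d a) (U : Finset (Fin n)) :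
    ∑ j ∈ U, d j ≤ ∑ j ∈ Finset.univ.filter (fun j : Fin n => (j : ℕ) < U.card), d j := by
  classical
  have hkn : U.card ≤ n := by
    have h0 := Finset.card_le_univ U
    rwa [Fintype.card_fin] at h0
  let g : Fin U.card ↪o Fin n := U.orderEmbOfFin rfl
  have hgm : StrictMono fun i : Fin U.card => ((g i : Fin n) : ℕ) := by
    intro a b hab
    exact g.strictMono hab
  have hUim : U = Finset.univ.image fun i : Fin U.card => g i := by
    ext x
    simp only [Finset.mem_image, Finset.mem_univ, true_and]
    constructor
    · intro hx
      have : x ∈ Set.range g := by rw [Finset.range_orderEmbOfFin]; exact hx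
      obtain ⟨i, hi⟩ := this; exact ⟨i, hi⟩
    · rintro ⟨i, rfl⟩; exact Finset.orderEmbOfFin_mem U rfl i
  have hfil : Finset.univ.filter (fun j : Fin n => (j : ℕ) < U.card)
      = Finset.univ.image fun i : Fin U.card => (⟨(i : ℕ), lt_of_lt_of_le i.2 hkn⟩ : Fin n) := by
    ext j
    simp only [Finset.mem_filter, Finset.mem_image, Finset.mem_univ, true_and]
    constructor
    · intro hj; exact ⟨⟨(j : ℕ), hj⟩, by simp [Fin.ext_iff]⟩
    · rintro ⟨i, rfl⟩; exact i.2
  conv_lhs => rw [hUim, Finset.sum_image (fun a _ b _ h => g.injective h)]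
  rw [hfil, Finset.sum_image (fun a _ b _ h => Fin.ext (by simpa [Fin.ext_iff] using h))]
  apply Finset.sum_le_sum
  intro i _
  apply hd
  simpa [Fin.le_def] using fin_strictMono_le hgm i

/-- `λ₁Γ_{1,n} + ⋯ + λ_nΓ_{n,n} = SP(λ₁+⋯+λ_n, λ₂+⋯+λ_n, …, λ_n)`. -/
theorem minkowski_sum_gamma (n : ℕ) (lam : Fin n → ℝ) (hlam : ∀ i, 0 ≤ lam i) :
    ∑ i : Fin n, lam i • gammaPolytope n ((i : ℕ) + 1) =
      signedPermutohedron (fun j : Fin n =>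
        ∑ i ∈ Finset.univ.filter (fun i : Fin n => (j : ℕ) ≤ (i : ℕ)), lam i) := by
  classical
  set y : Fin n → ℝ := fun j : Fin n =>
    ∑ i ∈ Finset.univ.filter (fun i : Fin n => (j : ℕ) ≤ (i : ℕ)), lam i with hy
  set Gset : ℕ → Set (Fin n → ℝ) := fun k =>
    {x | ∃ T : Finset (Fin n), T.card = k ∧ ∃ ε : Fin n → ℝ,
      (∀ i, ε i = 1 ∨ ε i = -1) ∧ x = fun i => if i ∈ T then ε i else 0} with hGset
  set W : Set (Fin n → ℝ) :=
    {x | ∃ w : Equiv.Perm (Fin n), ∃ ε : Fin n → ℝ,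
      (∀ i, ε i = 1 ∨ ε i = -1) ∧ x = fun i => ε i * y (w i)} with hW
  set S : Set (Fin n → ℝ) := ∑ i : Fin n, lam i • Gset ((i : ℕ) + 1) with hS
  have hR : signedPermutohedron y = convexHull ℝ W := rfl
  have hL : ∑ i : Fin n, lam i • gammaPolytope n ((i : ℕ) + 1) = convexHull ℝ S := by
    rw [hS, convexHull_sum]
    refine Finset.sum_congr rfl fun i _ => ?_
    exact (convexHull_smul (lam i) (Gset ((i : ℕ) + 1))).symm
  have hWfin : W.Finite := by
    have hsub : W ⊆ Set.range (fun p : Equiv.Perm (Fin n) × (Fin n → Bool) =>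
        fun j => (if p.2 j then (1 : ℝ) else -1) * y (p.1 j)) := by
      rintro x ⟨w, ε, hε, rfl⟩
      refine ⟨(w, fun j => if ε j = 1 then true else false), ?_⟩
      funext j
      rcases hε j with h | h
      · simp [h]
      · norm_num [h]
    exact (Set.finite_range _).subset hsub
  -- every generator of the signed permutohedron lies in the Minkowski sum of generators
  have hWS : W ⊆ S := by
    rintro x ⟨w, ε, hε, rfl⟩
    rw [hS, Set.mem_fintype_sum]
    refine ⟨fun i => lam i • (fun j => if (w j : ℕ) ≤ (i : ℕ) then ε j else 0),
      fun i => ?_, ?_⟩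
    · refine Set.smul_mem_smul_set ?_
      refine ⟨Finset.univ.filter (fun j => (w j : ℕ) ≤ (i : ℕ)), ?_, ε, hε, ?_⟩
      · have h1 : (Finset.univ.filter (fun j : Fin n => (w j : ℕ) ≤ (i : ℕ))).card
            = (Finset.univ.filter (fun k : Fin n => (k : ℕ) ≤ (i : ℕ))).card := by
          apply Finset.card_bij (fun j _ => w j)
          · intro a ha; simp only [Finset.mem_filter, Finset.mem_univ, true_and] at ha ⊢
            exact ha
          · intro a _ b _ h; exact w.injective h
          · intro b hb
            refine ⟨w.symm b, ?_, by simp⟩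
            simp only [Finset.mem_filter, Finset.mem_univ, true_and] at hb ⊢
            simpa using hb
        rw [h1]
        have h2 : Finset.univ.filter (fun k : Fin n => (k : ℕ) ≤ (i : ℕ)) = Finset.Iic i := by
          ext k
          simp only [Finset.mem_filter, Finset.mem_univ, true_and, Finset.mem_Iic, Fin.le_def]
        rw [h2, Fin.card_Iic]
      · funext j
        simp only [Finset.mem_filter, Finset.mem_univ, true_and]
    · funext j
      simp only [Finset.sum_apply, Pi.smul_apply, smul_eq_mul]
      have h3 : (∑ i : Fin n, lam i * (if (w j : ℕ) ≤ (i : ℕ) then ε j else 0))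
          = (∑ i ∈ Finset.univ.filter (fun i : Fin n => ((w j : ℕ)) ≤ (i : ℕ)), lam i) * ε j := by
        rw [Finset.sum_filter, Finset.sum_mul]
        apply Finset.sum_congr rfl
        intro i _
        by_cases h : (w j : ℕ) ≤ (i : ℕ) <;> simp [h]
      rw [h3, hy, mul_comm]
  have hRL : signedPermutohedron y ⊆ ∑ i : Fin n, lam i • gammaPolytope n ((i : ℕ) + 1) := by
    rw [hL, hR]
    exact convexHull_min (hWS.trans (subset_convexHull ℝ S)) (convex_convexHull ℝ S)
  -- the hard direction via separation
  have hSR : S ⊆ signedPermutohedron y := by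
    intro x hx
    by_contra hxn
    have hconv : Convex ℝ (signedPermutohedron y) := by rw [hR]; exact convex_convexHull ℝ W
    have hclosed : IsClosed (signedPermutohedron y) := by
      rw [hR]; exact (hWfin.isCompact_convexHull (𝕜 := ℝ)).isClosed
    obtain ⟨f, u, hfu, hux⟩ := geometric_hahn_banach_closed_point hconv hclosed hxn
    rw [hS, Set.mem_fintype_sum] at hx
    obtain ⟨g, hg, hgx⟩ := hx
    choose v hv hgv using fun i => Set.mem_smul_set.mp (hg i)
    set c : Fin n → ℝ := fun i => f (fun j => if i = j then (1 : ℝ) else 0) with hc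
    have hf_apply : ∀ z : Fin n → ℝ, f z = ∑ i, z i * c i := by
      intro z
      have h0 := (f : (Fin n → ℝ) →ₗ[ℝ] ℝ).pi_apply_eq_sum_univ z
      simpa [smul_eq_mul, hc] using h0
    set σ : Equiv.Perm (Fin n) := Tuple.sort (fun j => -|c j|) with hσ
    set d : Fin n → ℝ := fun j => |c (σ j)| with hd
    have hdanti : ∀ a b : Fin n, a ≤ b → d b ≤ d a := by
      intro a b hab
      have h2 := Tuple.monotone_sort (fun j => -|c j|) hab
      simp only [Function.comp_apply] at h2
      have h3 : -|c (σ a)| ≤ -|c (σ b)| := h2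
      simpa [hd] using neg_le_neg_iff.mp h3
    have key : ∀ i : Fin n, f (v i) ≤
        ∑ j ∈ Finset.univ.filter (fun j : Fin n => (j : ℕ) < (i : ℕ) + 1), d j := by
      intro i
      obtain ⟨T, hT, ε, hε, hvi⟩ := hv i
      have h1 : f (v i) = ∑ j ∈ T, ε j * c j := by
        rw [hf_apply, hvi]
        rw [show (∑ j : Fin n, (if j ∈ T then ε j else 0) * c j)
            = ∑ j : Fin n, (if j ∈ T then ε j * c j else 0) from
          Finset.sum_congr rfl fun j _ => by by_cases h : j ∈ T <;> simp [h]]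
        rw [Finset.sum_ite_mem, Finset.univ_inter]
      have h2 : ∑ j ∈ T, ε j * c j ≤ ∑ j ∈ T, |c j| := by
        apply Finset.sum_le_sum
        intro j _
        rcases hε j with h | h
        · rw [h, one_mul]; exact le_abs_self _
        · rw [h, neg_one_mul]; exact neg_le_abs _
      have h3 : ∑ j ∈ T, |c j| = ∑ u ∈ T.image σ.symm, d u := by
        rw [Finset.sum_image (fun a _ b _ h => σ.symm.injective h)]
        apply Finset.sum_congr rfl
        intro j _
        simp [hd]
      have hcard : (T.image σ.symm).card = (i : ℕ) + 1 := by
        rw [Finset.card_image_of_injective _ σ.symm.injective, hT]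
      calc f (v i) = ∑ j ∈ T, ε j * c j := h1
        _ ≤ ∑ j ∈ T, |c j| := h2
        _ = ∑ u ∈ T.image σ.symm, d u := h3
        _ ≤ ∑ j ∈ Finset.univ.filter
              (fun j : Fin n => (j : ℕ) < (T.image σ.symm).card), d j :=
            sum_antitone_le_topk d hdanti _
        _ = _ := by rw [hcard]
    set ε' : Fin n → ℝ := fun j => if c j < 0 then -1 else 1 with hε'
    set xstar : Fin n → ℝ := fun j => ε' j * y (σ.symm j) with hxstar
    have hxstarW : xstar ∈ W := by
      refine ⟨σ.symm, ε', fun j => ?_, rfl⟩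
      by_cases h : c j < 0
      · right; simp [hε', h]
      · left; simp [hε', h]
    have hfxstar : f xstar = ∑ j : Fin n, d j * y j := by
      rw [hf_apply]
      have h1 : ∀ j : Fin n, xstar j * c j = |c j| * y (σ.symm j) := by
        intro j
        by_cases h : c j < 0
        · simp only [hxstar, hε', if_pos h, abs_of_neg h]; ring
        · simp only [hxstar, hε', if_neg h, abs_of_nonneg (not_lt.mp h)]; ring
      calc ∑ j : Fin n, xstar j * c j = ∑ j : Fin n, |c j| * y (σ.symm j) :=
            Finset.sum_congr rfl fun j _ => h1 j
        _ = ∑ j : Fin n, |c (σ j)| * y (σ.symm (σ j)) :=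
            (Equiv.sum_comp σ (fun j => |c j| * y (σ.symm j))).symm
        _ = ∑ j : Fin n, d j * y j := by
            apply Finset.sum_congr rfl
            intro j _
            rw [Equiv.symm_apply_apply]
    have hfx : f x = ∑ i : Fin n, lam i * f (v i) := by
      rw [← hgx, map_sum]
      apply Finset.sum_congr rfl
      intro i _
      rw [← hgv i, f.map_smul, smul_eq_mul]
    have hbound : f x ≤ ∑ j : Fin n, d j * y j := by
      rw [hfx]
      calc ∑ i : Fin n, lam i * f (v i)
          ≤ ∑ i : Fin n, lam i *
              ∑ j ∈ Finset.univ.filter (fun j : Fin n => (j : ℕ) < (i : ℕ) + 1), d j := by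
            apply Finset.sum_le_sum
            intro i _
            exact mul_le_mul_of_nonneg_left (key i) (hlam i)
        _ = ∑ i : Fin n, ∑ j : Fin n,
              (if (j : ℕ) < (i : ℕ) + 1 then lam i * d j else 0) := by
            apply Finset.sum_congr rfl
            intro i _
            rw [Finset.mul_sum, Finset.sum_filter]
        _ = ∑ j : Fin n, ∑ i : Fin n,
              (if (j : ℕ) < (i : ℕ) + 1 then lam i * d j else 0) := Finset.sum_comm
        _ = ∑ j : Fin n, d j * y j := by
            apply Finset.sum_congr rfl
            intro j _
            simp only [Nat.lt_succ_iff]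
            rw [hy]
            rw [show (∑ i : Fin n, if (j : ℕ) ≤ (i : ℕ) then lam i * d j else 0)
                = ∑ i ∈ Finset.univ.filter (fun i : Fin n => (j : ℕ) ≤ (i : ℕ)),
                    lam i * d j from (Finset.sum_filter _ _).symm]
            rw [← Finset.sum_mul, mul_comm]
    have h4 : f xstar < u := hfu xstar (by rw [hR]; exact subset_convexHull ℝ W hxstarW)
    rw [hfxstar] at h4
    linarith
  have hconv' : Convex ℝ (signedPermutohedron y) := by
    rw [hR]; exact convex_convexHull ℝ W
  apply Set.Subset.antisymm
  · rw [hL]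
    exact convexHull_min hSR hconv'
  · exact hRL


end MixedEulerian
end

section
/- Let y_1 ≥ ... ≥ y_{n+1} be real numbers, let P = P(y_1,...,y_{n+1}) be the permutohedron, fix y_{n+1} ≤ x ≤ y_1, and let i be such that y_{i+1} ≤ x ≤ y_i. Then the cross section of P with first coordinate equal to x is {x} × P(y_1,...,y_{i-1}, y_i + y_{i+1} - x, y_{i+2},...,y_{n+1}). -/
open scoped Pointwise
open MeasureTheory Nat

namespace MixedEulerian

section CrossSectionAux

open Finset

variable {m : ℕ}

def Fk (m k : ℕ) : Finset (Fin m) := Finset.univ.filter (fun j => (j : ℕ) < k)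

lemma mem_Fk {k : ℕ} {j : Fin m} : j ∈ Fk m k ↔ (j : ℕ) < k := by
  simp [Fk]

lemma card_Fk {k : ℕ} (h : k ≤ m) : (Fk m k).card = k := by
  have : Fk m k = (Finset.range k).attachFin
      (fun v hv => lt_of_lt_of_le (Finset.mem_range.mp hv) h) := by
    ext j; simp [mem_Fk, Finset.mem_attachFin]
  rw [this, Finset.card_attachFin, Finset.card_range]

lemma Fk_of_le {k : ℕ} (h : m ≤ k) : Fk m k = Finset.univ := by
  ext j; simp [mem_Fk]; omega

def topSum (y : Fin m → ℝ) (k : ℕ) : ℝ := ∑ j ∈ Fk m k, y j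

lemma Fk_succ {k : ℕ} (hk : k < m) :
    Fk m (k + 1) = insert ⟨k, hk⟩ (Fk m k) := by
  ext j
  simp [mem_Fk, Fin.ext_iff]
  omega

lemma sum_le_topSum (y : Fin m → ℝ) (hy : Antitone y) (T : Finset (Fin m)) :
    ∑ t ∈ T, y t ≤ topSum y T.card := by
  set N := T.card with hN
  clear_value N
  induction N generalizing T with
  | zero =>
    obtain rfl : T = ∅ := Finset.card_eq_zero.mp hN.symm
    simp [topSum, Fk]
  | succ N ih =>
    have hTne : T.Nonempty := by
      rw [← Finset.card_pos, ← hN]; omega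
    set t := T.max' hTne with ht
    have htT : t ∈ T := T.max'_mem hTne
    have hNm : N < m := by
      have := T.card_le_univ
      simp at this; omega
    have hcard' : N = (T.erase t).card := by
      rw [Finset.card_erase_of_mem htT, ← hN]; omega
    have hstep := ih (T.erase t) hcard'
    have hNt : N ≤ (t : ℕ) := by
      have hsub : T ⊆ Fk m ((t : ℕ) + 1) := by
        intro a ha
        rw [mem_Fk]
        have := T.le_max' a ha
        omega
      have := Finset.card_le_card hsub
      have h2 : ((t : ℕ) + 1) ≤ m := t.2
      rw [card_Fk h2, ← hN] at this
      omega
    have hyt : y t ≤ y ⟨N, hNm⟩ := hy (by rw [Fin.le_def]; simpa using hNt)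
    have hsplit : topSum y (N + 1) = y ⟨N, hNm⟩ + topSum y N := by
      rw [topSum, topSum, Fk_succ hNm, Finset.sum_insert (by simp [mem_Fk])]
    have : ∑ t ∈ T, y t = y t + ∑ a ∈ T.erase t, y a :=
      (Finset.add_sum_erase T y htT).symm
    rw [this, hsplit]
    exact add_le_add hyt hstep

lemma vertex_mem (y : Fin m → ℝ) (w : Equiv.Perm (Fin m)) :
    y ∘ ⇑w ∈ permutohedron y :=
  subset_convexHull ℝ _ ⟨w, rfl⟩

lemma permutohedron_convex (y : Fin m → ℝ) : Convex ℝ (permutohedron y) :=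
  convex_convexHull ℝ _

lemma mem_permutohedron_props (y : Fin m → ℝ) (hy : Antitone y) {p : Fin m → ℝ}
    (hp : p ∈ permutohedron y) :
    (∑ j, p j = ∑ j, y j) ∧ ∀ S : Finset (Fin m), ∑ s ∈ S, p s ≤ topSum y S.card := by
  have hC : Convex ℝ {p : Fin m → ℝ |
      (∑ j, p j = ∑ j, y j) ∧ ∀ S : Finset (Fin m), ∑ s ∈ S, p s ≤ topSum y S.card} := by
    rintro p hp q hq a b ha hb hab
    constructor
    · have : ∑ j, (a • p + b • q) j = a * ∑ j, p j + b * ∑ j, q j := by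
        simp [Finset.sum_add_distrib, Finset.mul_sum]
      rw [this, hp.1, hq.1, ← add_mul, hab, one_mul]
    · intro S
      have : ∑ s ∈ S, (a • p + b • q) s = a * ∑ s ∈ S, p s + b * ∑ s ∈ S, q s := by
        simp [Finset.sum_add_distrib, Finset.mul_sum]
      rw [this]
      calc a * ∑ s ∈ S, p s + b * ∑ s ∈ S, q s
          ≤ a * topSum y S.card + b * topSum y S.card :=
            add_le_add (mul_le_mul_of_nonneg_left (hp.2 S) ha)
              (mul_le_mul_of_nonneg_left (hq.2 S) hb)
        _ = topSum y S.card := by rw [← add_mul, hab, one_mul]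
  have := convexHull_min ?_ hC hp
  · exact this
  · rintro z ⟨w, rfl⟩
    constructor
    · simpa using Equiv.sum_comp w y
    · intro S
      rw [show ∑ s ∈ S, (y ∘ ⇑w) s = ∑ s ∈ S.image ⇑w, y s from
        (Finset.sum_image (fun a _ b _ h => w.injective h)).symm]
      have := sum_le_topSum y hy (S.image ⇑w)
      rwa [Finset.card_image_of_injective S w.injective] at this

lemma comp_perm_mem (y : Fin m → ℝ) {p : Fin m → ℝ} (σ : Equiv.Perm (Fin m))
    (hp : p ∈ permutohedron y) : p ∘ ⇑σ ∈ permutohedron y := by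
  let L : (Fin m → ℝ) →ₗ[ℝ] (Fin m → ℝ) :=
    { toFun := fun z => z ∘ ⇑σ, map_add' := fun _ _ => rfl, map_smul' := fun _ _ => rfl }
  have hC : Convex ℝ {z : Fin m → ℝ | z ∘ ⇑σ ∈ permutohedron y} :=
    (permutohedron_convex y).linear_preimage L
  refine convexHull_min ?_ hC hp
  rintro z ⟨w, rfl⟩
  exact subset_convexHull ℝ _ ⟨σ.trans w, rfl⟩

lemma perm_hull_subset (y y' : Fin m → ℝ)
    (h : ∀ w : Equiv.Perm (Fin m), y' ∘ ⇑w ∈ permutohedron y) :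
    permutohedron y' ⊆ permutohedron y :=
  convexHull_min (by rintro z ⟨w, rfl⟩; exact h w) (permutohedron_convex y)


lemma rado_sorted (m : ℕ) (d : ℕ) : ∀ (y p : Fin m → ℝ), Antitone y → Antitone p →
    (∀ k : ℕ, ∑ j ∈ Fk m k, p j ≤ ∑ j ∈ Fk m k, y j) → (∑ j, p j = ∑ j, y j) →
    (Finset.univ.filter fun i => p i ≠ y i).card ≤ d → p ∈ permutohedron y := by
  induction d with
  | zero =>
    intro y p hy hp hmaj hsum hcard
    have : p = y := by
      funext i
      by_contra h
      have : i ∈ Finset.univ.filter fun i => p i ≠ y i := by simp [h]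
      have := Finset.card_pos.mpr ⟨i, this⟩
      omega
    subst this
    exact subset_convexHull ℝ _ ⟨1, by simp⟩
  | succ d ih =>
    intro y p hy hp hmaj hsum hcard
    by_cases hpy : p = y
    · subst hpy; exact subset_convexHull ℝ _ ⟨1, by simp⟩
    -- find k : least index with y k < p k
    have hKne : (Finset.univ.filter fun i => y i < p i).Nonempty := by
      by_contra hK
      rw [Finset.not_nonempty_iff_eq_empty, Finset.filter_eq_empty_iff] at hK
      have hle : ∀ i ∈ Finset.univ, p i ≤ y i := fun i _ => not_lt.mp (hK (Finset.mem_univ i))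
      have := (Finset.sum_eq_sum_iff_of_le hle).mp hsum
      exact hpy (funext fun i => this i (Finset.mem_univ i))
    set k := (Finset.univ.filter fun i => y i < p i).min' hKne with hkdef
    have hk : y k < p k := by
      have := (Finset.univ.filter fun i => y i < p i).min'_mem hKne
      simpa using this
    have hkmin : ∀ l, y l < p l → k ≤ l := fun l hl =>
      Finset.min'_le _ l (by simpa using hl)
    have hlek : ∀ l, l < k → p l ≤ y l := fun l hl =>
      not_lt.mp (fun h => absurd (hkmin l h) (not_le.mpr hl))
    -- find j : greatest index < k with p j < y j
    have hJne : (Finset.univ.filter fun l => l < k ∧ p l < y l).Nonempty := by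
      by_contra hJ
      rw [Finset.not_nonempty_iff_eq_empty, Finset.filter_eq_empty_iff] at hJ
      have heq : ∀ l, l < k → p l = y l := by
        intro l hl
        have h1 := hlek l hl
        have h2 := hJ (Finset.mem_univ l)
        push_neg at h2
        exact le_antisymm h1 (h2 hl)
      have hins : Fk m ((k : ℕ) + 1) = insert k (Fk m (k : ℕ)) := by
        ext l
        simp [mem_Fk, Fin.ext_iff]
        omega
      have := hmaj ((k : ℕ) + 1)
      rw [hins, Finset.sum_insert (by simp [mem_Fk]), Finset.sum_insert (by simp [mem_Fk])] at this
      have heqs : ∑ j ∈ Fk m (k : ℕ), p j = ∑ j ∈ Fk m (k : ℕ), y j :=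
        Finset.sum_congr rfl fun l hl => heq l (by rw [Fin.lt_def]; exact mem_Fk.mp hl)
      rw [heqs] at this
      linarith
    set j := (Finset.univ.filter fun l => l < k ∧ p l < y l).max' hJne with hjdef
    have hj : j < k ∧ p j < y j := by
      have := (Finset.univ.filter fun l => l < k ∧ p l < y l).max'_mem hJne
      exact (Finset.mem_filter.mp this).2
    have hjmax : ∀ l, l < k → p l < y l → l ≤ j := fun l h1 h2 =>
      Finset.le_max' _ l (by simp [h1, h2])
    have hmid : ∀ l, j < l → l < k → p l = y l := by
      intro l h1 h2
      rcases lt_or_eq_of_le (hlek l h2) with h | h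
      · exact absurd (hjmax l h2 h) (not_le.mpr h1)
      · exact h
    have hjk : j < k := hj.1
    have hpjk : p k ≤ p j := hp hjk.le
    have hyjk : y k < y j := by linarith [hj.2, hk]
    set ε := min (y j - p j) (p k - y k) with hεdef
    have hε : 0 < ε := lt_min (by linarith [hj.2]) (by linarith [hk])
    have hε1 : ε ≤ y j - p j := min_le_left _ _
    have hε2 : ε ≤ p k - y k := min_le_right _ _
    set y' := Function.update (Function.update y j (y j - ε)) k (y k + ε) with hy'def
    have hjkne : j ≠ k := ne_of_lt hjk
    have hy'j : y' j = y j - ε := by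
      rw [hy'def, Function.update_of_ne hjkne, Function.update_self]
    have hy'k : y' k = y k + ε := by rw [hy'def, Function.update_self]
    have hy'o : ∀ l, l ≠ j → l ≠ k → y' l = y l := fun l h1 h2 => by
      rw [hy'def, Function.update_of_ne h2, Function.update_of_ne h1]
    have hptw : ∀ l, y' l = y l + ((if l = j then -ε else 0) + (if l = k then ε else 0)) := by
      intro l
      rcases eq_or_ne l j with rfl | h1
      · simp [hy'j, if_neg hjkne]; ring
      · rcases eq_or_ne l k with rfl | h2
        · simp [hy'k, if_neg h1]
        · simp [hy'o l h1 h2, if_neg h1, if_neg h2]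
    -- y' is antitone
    have hy' : Antitone y' := by
      intro a b hab
      rcases eq_or_lt_of_le hab with rfl | hab'
      · exact le_refl _
      rcases eq_or_ne a j with rfl | haj
      · -- a = j
        rcases eq_or_ne b k with rfl | hbk
        · rw [hy'j, hy'k]; linarith
        · have hbj : b ≠ j := ne_of_gt hab'
          rw [hy'j, hy'o b hbj hbk]
          rcases lt_trichotomy b k with hb | rfl | hb
          · have := hmid b hab' hb
            linarith [hp hab'.le, this]
          · exact absurd rfl hbk
          · linarith [hy hb.le, hp hab'.le, hpjk, hk]
      · rcases eq_or_ne a k with rfl | hak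
        · -- a = k
          have hbk : b ≠ k := ne_of_gt hab'
          have hbj : b ≠ j := fun h => absurd (h ▸ hab') (not_lt.mpr hjk.le)
          rw [hy'k, hy'o b hbj hbk]
          linarith [hy hab'.le]
        · -- a ∉ {j, k}
          rw [hy'o a haj hak]
          rcases eq_or_ne b j with rfl | hbj
          · rw [hy'j]
            linarith [hy hab'.le]
          · rcases eq_or_ne b k with rfl | hbk
            · rw [hy'k]
              have hak' : a < k := hab'
              rcases lt_trichotomy a j with ha | rfl | ha
              · linarith [hy ha.le, hj.2, hpjk]
              · exact absurd rfl haj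
              · have := hmid a ha hak'
                linarith [hp hak'.le, this]
            · rw [hy'o b hbj hbk]
              exact hy hab
    -- sums of y' over Fk sets
    have hsumS : ∀ S : Finset (Fin m), ∑ l ∈ S, y' l =
        ∑ l ∈ S, y l + ((if j ∈ S then -ε else 0) + (if k ∈ S then ε else 0)) := by
      intro S
      rw [Finset.sum_congr rfl (fun l _ => hptw l), Finset.sum_add_distrib,
        Finset.sum_add_distrib, Finset.sum_ite_eq' S j (fun _ => -ε),
        Finset.sum_ite_eq' S k (fun _ => ε)]
    have hsum' : ∑ l, p l = ∑ l, y' l := by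
      rw [hsumS Finset.univ]
      simp [hsum]
    have hmaj' : ∀ kk : ℕ, ∑ l ∈ Fk m kk, p l ≤ ∑ l ∈ Fk m kk, y' l := by
      intro kk
      rw [hsumS]
      by_cases hkin : k ∈ Fk m kk
      · have hjin : j ∈ Fk m kk := by
          rw [mem_Fk] at hkin ⊢
          have : (j : ℕ) < (k : ℕ) := hjk
          omega
        rw [if_pos hkin, if_pos hjin]
        have := hmaj kk
        linarith
      · by_cases hjin : j ∈ Fk m kk
        · rw [if_pos hjin, if_neg hkin]
          have hsub : ∑ l ∈ Fk m kk, (p l - y l) ≤ -ε := by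
            have hsplit : ∑ l ∈ Fk m kk, (p l - y l) =
                (p j - y j) + ∑ l ∈ (Fk m kk).erase j, (p l - y l) :=
              (Finset.add_sum_erase _ _ hjin).symm
            have hrest : ∑ l ∈ (Fk m kk).erase j, (p l - y l) ≤ 0 := by
              apply Finset.sum_nonpos
              intro l hl
              have hlmem := Finset.mem_of_mem_erase hl
              rw [mem_Fk] at hlmem hkin
              have hlk : l < k := by rw [Fin.lt_def]; omega
              linarith [hlek l hlk]
            linarith
          rw [Finset.sum_sub_distrib] at hsub
          linarith
        · rw [if_neg hjin, if_neg hkin]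
          have := hmaj kk
          linarith
    -- the difference set shrinks
    have hmem_j : j ∈ Finset.univ.filter fun i => p i ≠ y i := by
      simp [ne_of_lt hj.2]
    have hmem_k : k ∈ Finset.univ.filter fun i => p i ≠ y i := by
      simp [ne_of_gt hk]
    have hcard' : (Finset.univ.filter fun i => p i ≠ y' i).card ≤ d := by
      rcases min_cases (y j - p j) (p k - y k) with ⟨hmin, _⟩ | ⟨hmin, _⟩
      · -- ε = y j - p j, so p j = y' j
        have hpj : p j = y' j := by
          have h := hεdef.trans hmin
          rw [hy'j]; linarith
        have hsub : (Finset.univ.filter fun i => p i ≠ y' i) ⊆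
            (Finset.univ.filter fun i => p i ≠ y i).erase j := by
          intro l hl
          simp only [Finset.mem_filter, Finset.mem_univ, true_and] at hl
          rcases eq_or_ne l j with rfl | h1
          · exact absurd hpj hl
          · rcases eq_or_ne l k with rfl | h2
            · exact Finset.mem_erase.mpr ⟨hjkne.symm, hmem_k⟩
            · rw [hy'o l h1 h2] at hl
              exact Finset.mem_erase.mpr ⟨h1, by simp [hl]⟩
        calc (Finset.univ.filter fun i => p i ≠ y' i).card
            ≤ ((Finset.univ.filter fun i => p i ≠ y i).erase j).card := Finset.card_le_card hsub
          _ = (Finset.univ.filter fun i => p i ≠ y i).card - 1 := Finset.card_erase_of_mem hmem_j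
          _ ≤ d := by omega
      · have hpk : p k = y' k := by
          have h := hεdef.trans hmin
          rw [hy'k]; linarith
        have hsub : (Finset.univ.filter fun i => p i ≠ y' i) ⊆
            (Finset.univ.filter fun i => p i ≠ y i).erase k := by
          intro l hl
          simp only [Finset.mem_filter, Finset.mem_univ, true_and] at hl
          rcases eq_or_ne l k with rfl | h2
          · exact absurd hpk hl
          · rcases eq_or_ne l j with rfl | h1
            · exact Finset.mem_erase.mpr ⟨hjkne, hmem_j⟩
            · rw [hy'o l h1 h2] at hl
              exact Finset.mem_erase.mpr ⟨h2, by simp [hl]⟩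
        calc (Finset.univ.filter fun i => p i ≠ y' i).card
            ≤ ((Finset.univ.filter fun i => p i ≠ y i).erase k).card := Finset.card_le_card hsub
          _ = (Finset.univ.filter fun i => p i ≠ y i).card - 1 := Finset.card_erase_of_mem hmem_k
          _ ≤ d := by omega
    have hpmem : p ∈ permutohedron y' := ih y' p hy' hp hmaj' hsum' hcard'
    -- permutohedron y' ⊆ permutohedron y
    set t := ε / (y j - y k) with htdef
    have hyjk0 : y j - y k ≠ 0 := by linarith
    have ht0 : 0 ≤ t := div_nonneg hε.le (by linarith)
    have ht1 : t ≤ 1 := by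
      rw [htdef, div_le_one (by linarith)]
      linarith
    have hh : t * (y j - y k) = ε := div_mul_cancel₀ ε hyjk0
    have hy'e : y' = fun l => (1 - t) * y l + t * y (Equiv.swap j k l) := by
      funext l
      by_cases h1 : l = j
      · rw [h1, hy'j, Equiv.swap_apply_left]
        linear_combination hh
      · by_cases h2 : l = k
        · rw [h2, hy'k, Equiv.swap_apply_right]
          linear_combination -hh
        · rw [hy'o l h1 h2, Equiv.swap_apply_of_ne_of_ne h1 h2]
          ring
    refine perm_hull_subset y y' ?_ hpmem
    intro w
    have : y' ∘ ⇑w = (1 - t) • (y ∘ ⇑w) + t • (y ∘ ⇑(w.trans (Equiv.swap j k))) := by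
      funext a
      simp only [Function.comp_apply, Pi.add_apply, Pi.smul_apply, smul_eq_mul,
        Equiv.trans_apply, hy'e]
    rw [this]
    exact (permutohedron_convex y) (vertex_mem y w) (vertex_mem y _)
      (by linarith) ht0 (by ring)


lemma topSum_card (y : Fin m → ℝ) (k : ℕ) :
    topSum y (Fk m k).card = ∑ j ∈ Fk m k, y j := by
  by_cases h : k ≤ m
  · rw [card_Fk h]; rfl
  · push_neg at h
    rw [Fk_of_le h.le, topSum, Fk_of_le (by simp [Finset.card_univ])]

lemma rado (y : Fin m → ℝ) (hy : Antitone y) {p : Fin m → ℝ}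
    (hsum : ∑ j, p j = ∑ j, y j)
    (hS : ∀ S : Finset (Fin m), ∑ s ∈ S, p s ≤ topSum y S.card) :
    p ∈ permutohedron y := by
  set σ := Tuple.sort (fun i => -p i) with hσ
  have hmono := Tuple.monotone_sort (fun i => -p i)
  have hq_anti : Antitone (p ∘ ⇑σ) := by
    intro a b hab
    have := hmono hab
    simpa using this
  have hmaj : ∀ k : ℕ, ∑ l ∈ Fk m k, (p ∘ ⇑σ) l ≤ ∑ l ∈ Fk m k, y l := by
    intro k
    have h1 : ∑ l ∈ Fk m k, (p ∘ ⇑σ) l = ∑ l ∈ (Fk m k).image ⇑σ, p l :=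
      (Finset.sum_image (fun a _ b _ h => σ.injective h)).symm
    have h2 := hS ((Fk m k).image ⇑σ)
    rw [Finset.card_image_of_injective _ σ.injective, topSum_card] at h2
    linarith [h1 ▸ h2]
  have hsum' : ∑ l, (p ∘ ⇑σ) l = ∑ l, y l := by
    have : ∑ l, (p ∘ ⇑σ) l = ∑ l, p l := Equiv.sum_comp σ p
    rw [this, hsum]
  have hqmem : (p ∘ ⇑σ) ∈ permutohedron y :=
    rado_sorted m (Finset.univ.filter fun i => (p ∘ ⇑σ) i ≠ y i).card y (p ∘ ⇑σ)
      hy hq_anti hmaj hsum' le_rfl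
  have : (p ∘ ⇑σ) ∘ ⇑σ⁻¹ = p := by
    funext a
    simp
  rw [← this]
  exact comp_perm_mem y σ⁻¹ hqmem

end CrossSectionAux

/-- the cross section of the permutohedron with first coordinate `x`
is `{x} × P(y₁,…,y_{i-1}, y_i + y_{i+1} - x, y_{i+2},…,y_{n+1})`. -/
theorem permutohedron_cross_section (n : ℕ) (y : Fin (n + 1) → ℝ) (hy : Antitone y)
    (x : ℝ) (i : Fin n) (h1 : y i.succ ≤ x) (h2 : x ≤ y i.castSucc) :
    {p ∈ permutohedron y | p 0 = x} =
      (fun q : Fin n → ℝ => Fin.cons x q) ''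
        permutohedron (fun j : Fin n =>
          if (j : ℕ) < (i : ℕ) then y j.castSucc
          else if j = i then y i.castSucc + y i.succ - x
          else y j.succ) := by
  set Y' : Fin n → ℝ := fun j : Fin n =>
    if (j : ℕ) < (i : ℕ) then y j.castSucc
    else if j = i then y i.castSucc + y i.succ - x
    else y j.succ with hY'def
  have hin : (i : ℕ) < n := i.2
  have hmono : ∀ a b : Fin (n + 1), (a : ℕ) ≤ (b : ℕ) → y b ≤ y a :=
    fun a b h => hy (Fin.le_def.mpr h)
  have hysc : y i.succ ≤ y i.castSucc := hmono _ _ (by simp)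
  set e : Fin n → Fin (n + 1) :=
    fun k => if (k : ℕ) < (i : ℕ) then k.castSucc else k.succ with hedef
  have heval : ∀ k : Fin n, ((e k : ℕ)) =
      if (k : ℕ) < (i : ℕ) then (k : ℕ) else (k : ℕ) + 1 := by
    intro k
    by_cases h : (k : ℕ) < (i : ℕ)
    · simp only [hedef, if_pos h, Fin.coe_castSucc]
    · simp only [hedef, if_neg h, Fin.val_succ]
  have he_inj : Function.Injective e := by
    intro a b hab
    have h := congrArg Fin.val hab
    rw [heval, heval] at h
    have : (a : ℕ) = (b : ℕ) := by split_ifs at h <;> omega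
    exact Fin.ext this
  have he_ne : ∀ k, (e k : ℕ) ≠ (i : ℕ) := by
    intro k; rw [heval]; split <;> omega
  have he_ne' : ∀ k, e k ≠ i.castSucc := by
    intro k h; exact he_ne k (by rw [h, Fin.coe_castSucc])
  have hei : e i = i.succ := by rw [hedef]; simp
  have hY'e : ∀ k : Fin n, Y' k = y (e k) +
      (if k = i then y i.castSucc - x else 0) := by
    intro k
    rw [hY'def, hedef]
    by_cases h : (k : ℕ) < (i : ℕ)
    · have hki : k ≠ i := fun hh => by rw [hh] at h; omega
      simp [h, hki]
    · by_cases h2' : k = i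
      · subst h2'
        simp [h]
        ring
      · simp [h, h2']
  -- sum over image of e
  have himg0 : Finset.univ.image e = Finset.univ.erase i.castSucc := by
    apply Finset.eq_of_subset_of_card_le
    · intro a ha
      obtain ⟨k, _, rfl⟩ := Finset.mem_image.mp ha
      exact Finset.mem_erase.mpr ⟨he_ne' k, Finset.mem_univ _⟩
    · rw [Finset.card_erase_of_mem (Finset.mem_univ _),
        Finset.card_image_of_injective _ he_inj]
      simp
  have hsum_e : ∑ k, y (e k) + y i.castSucc = ∑ a, y a := by
    have h1' : ∑ k, y (e k) = ∑ a ∈ Finset.univ.erase i.castSucc, y a := by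
      rw [← himg0, Finset.sum_image (fun a _ b _ h => he_inj h)]
    rw [h1', add_comm]
    exact Finset.add_sum_erase _ y (Finset.mem_univ _)
  have hsum_Y' : ∑ j, Y' j = ∑ a, y a - x := by
    rw [Finset.sum_congr rfl (fun k _ => hY'e k), Finset.sum_add_distrib,
      Finset.sum_ite_eq' Finset.univ i (fun _ => y i.castSucc - x),
      if_pos (Finset.mem_univ i)]
    linarith [hsum_e]
  -- topSum identities
  have himg1 : ∀ k : ℕ, k ≤ (i : ℕ) → (Fk n k).image e = Fk (n + 1) k := by
    intro k hk
    apply Finset.eq_of_subset_of_card_le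
    · intro a ha
      obtain ⟨l, hl, rfl⟩ := Finset.mem_image.mp ha
      rw [mem_Fk] at hl ⊢
      rw [heval]
      split <;> omega
    · rw [Finset.card_image_of_injective _ he_inj, card_Fk (by omega), card_Fk (by omega)]
  have hts1 : ∀ k : ℕ, k ≤ (i : ℕ) → topSum Y' k = topSum y k := by
    intro k hk
    rw [topSum, topSum, Finset.sum_congr rfl (fun l _ => hY'e l), Finset.sum_add_distrib,
      Finset.sum_ite_eq' (Fk n k) i (fun _ => y i.castSucc - x),
      if_neg (by rw [mem_Fk]; omega), ← himg1 k hk,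
      Finset.sum_image (fun a _ b _ h => he_inj h)]
    ring
  have himg2 : ∀ k : ℕ, (i : ℕ) < k → k ≤ n →
      (Fk n k).image e = (Fk (n + 1) (k + 1)).erase i.castSucc := by
    intro k hk1 hk2
    apply Finset.eq_of_subset_of_card_le
    · intro a ha
      obtain ⟨l, hl, rfl⟩ := Finset.mem_image.mp ha
      rw [mem_Fk] at hl
      refine Finset.mem_erase.mpr ⟨he_ne' l, ?_⟩
      rw [mem_Fk, heval]
      split <;> omega
    · rw [Finset.card_image_of_injective _ he_inj,
        Finset.card_erase_of_mem (by rw [mem_Fk]; simp; omega),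
        card_Fk (by omega), card_Fk (by omega)]
      omega
  have hts2 : ∀ k : ℕ, (i : ℕ) < k → k ≤ n → topSum Y' k = topSum y (k + 1) - x := by
    intro k hk1 hk2
    rw [topSum, topSum, Finset.sum_congr rfl (fun l _ => hY'e l), Finset.sum_add_distrib,
      Finset.sum_ite_eq' (Fk n k) i (fun _ => y i.castSucc - x),
      if_pos (by rw [mem_Fk]; omega)]
    have h1' : ∑ l ∈ Fk n k, y (e l) =
        ∑ a ∈ (Fk (n + 1) (k + 1)).erase i.castSucc, y a := by
      rw [← himg2 k hk1 hk2, Finset.sum_image (fun a _ b _ h => he_inj h)]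
    have h2' : y i.castSucc + ∑ a ∈ (Fk (n + 1) (k + 1)).erase i.castSucc, y a =
        ∑ a ∈ Fk (n + 1) (k + 1), y a :=
      Finset.add_sum_erase _ y (by rw [mem_Fk]; simp; omega)
    linarith
  -- antitonicity of Y'
  have hY'anti : Antitone Y' := by
    intro a b hab
    have habv : (a : ℕ) ≤ (b : ℕ) := hab
    by_cases hai : a = i
    · by_cases hbi : b = i
      · rw [hai, hbi]
      · have hbv : (i : ℕ) < (b : ℕ) := by
          have : (b : ℕ) ≠ (i : ℕ) := fun h => hbi (Fin.ext h)
          have : (i : ℕ) ≤ (b : ℕ) := by rw [← hai]; exact habv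
          omega
        have hb1 : Y' b = y (e b) := by rw [hY'e b, if_neg hbi]; ring
        have ha1 : Y' a = y (e a) + (y i.castSucc - x) := by rw [hY'e a, if_pos hai]
        have hcmp : y (e b) ≤ y (e a) := by
          apply hmono
          rw [heval, heval, hai]
          split <;> split <;> omega
        rw [ha1, hb1]
        have hea : y (e a) = y i.succ := by rw [hai, hei]
        linarith [hcmp]
    · by_cases hbi : b = i
      · have hav : (a : ℕ) < (i : ℕ) := by
          have : (a : ℕ) ≠ (i : ℕ) := fun h => hai (Fin.ext h)
          have : (a : ℕ) ≤ (i : ℕ) := by rw [← hbi]; exact habv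
          omega
        have ha1 : Y' a = y (e a) := by rw [hY'e a, if_neg hai]; ring
        have hb1 : Y' b = y (e b) + (y i.castSucc - x) := by rw [hY'e b, if_pos hbi]
        have heb : y (e b) = y i.succ := by rw [hbi, hei]
        have hcmp : y i.castSucc ≤ y (e a) := by
          apply hmono
          rw [heval]
          simp only [Fin.coe_castSucc]
          split <;> omega
        rw [ha1, hb1, heb]
        linarith [hcmp]
      · have ha1 : Y' a = y (e a) := by rw [hY'e a, if_neg hai]; ring
        have hb1 : Y' b = y (e b) := by rw [hY'e b, if_neg hbi]; ring
        rw [ha1, hb1]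
        apply hmono
        rw [heval, heval]
        split <;> split <;> omega
  apply Set.Subset.antisymm
  · rintro p ⟨hp, hp0⟩
    obtain ⟨hTot, hIneq⟩ := mem_permutohedron_props y hy hp
    refine ⟨fun j => p j.succ, rado Y' hY'anti ?_ ?_, ?_⟩
    · show ∑ j : Fin n, p j.succ = ∑ j, Y' j
      have hs1 := Fin.sum_univ_succ p
      rw [hp0] at hs1
      rw [hsum_Y']
      linarith [hTot]
    · intro S
      show ∑ s ∈ S, p s.succ ≤ topSum Y' S.card
      set S1 : Finset (Fin (n + 1)) := S.map ⟨Fin.succ, Fin.succ_injective n⟩ with hS1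
      have hc1 : S1.card = S.card := Finset.card_map _
      have hsum1 : ∑ s ∈ S1, p s = ∑ s ∈ S, p s.succ := Finset.sum_map S _ p
      have hcn : S.card ≤ n := by
        have := S.card_le_univ
        simpa using this
      by_cases hk : S.card ≤ (i : ℕ)
      · rw [hts1 S.card hk]
        have h := hIneq S1
        rw [hc1, hsum1] at h
        exact h
      · push_neg at hk
        have h0 : (0 : Fin (n + 1)) ∉ S1 := by
          rw [hS1]
          simp [Fin.succ_ne_zero]
        have h := hIneq (insert 0 S1)
        rw [Finset.sum_insert h0, Finset.card_insert_of_notMem h0, hc1, hsum1, hp0] at h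
        rw [hts2 S.card hk hcn]
        linarith
    · funext a
      show (Fin.cons x (fun j : Fin n => p j.succ) : Fin (n + 1) → ℝ) a = p a
      refine Fin.cases ?_ (fun j => ?_) a
      · rw [Fin.cons_zero]; exact hp0.symm
      · rw [Fin.cons_succ]
  · rintro p ⟨q, hq, rfl⟩
    show (Fin.cons x q : Fin (n + 1) → ℝ) ∈ permutohedron y ∧
      (Fin.cons x q : Fin (n + 1) → ℝ) 0 = x
    refine ⟨?_, Fin.cons_zero (α := fun _ => ℝ) x q⟩
    have hC : Convex ℝ {q : Fin n → ℝ | Fin.cons x q ∈ permutohedron y} := by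
      intro q1 hq1 q2 hq2 a b ha hb hab
      have hkey : (Fin.cons x (a • q1 + b • q2) : Fin (n + 1) → ℝ) =
          a • (Fin.cons x q1 : Fin (n + 1) → ℝ) + b • (Fin.cons x q2 : Fin (n + 1) → ℝ) := by
        funext c
        refine Fin.cases ?_ (fun j => ?_) c
        · simp only [Fin.cons_zero, Pi.add_apply, Pi.smul_apply, smul_eq_mul]
          rw [← add_mul, hab, one_mul]
        · simp only [Fin.cons_succ, Pi.add_apply, Pi.smul_apply, smul_eq_mul]
      show (Fin.cons x (a • q1 + b • q2) : Fin (n + 1) → ℝ) ∈ permutohedron y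
      rw [hkey]
      exact (permutohedron_convex y) hq1 hq2 ha hb hab
    refine convexHull_min ?_ hC hq
    rintro z ⟨w, rfl⟩
    show (Fin.cons x (Y' ∘ ⇑w) : Fin (n + 1) → ℝ) ∈ permutohedron y
    set t : ℝ := if y i.castSucc = y i.succ then 0
      else (y i.castSucc - x) / (y i.castSucc - y i.succ) with htdef
    have ht : 0 ≤ t ∧ t ≤ 1 ∧ x = y i.castSucc - t * (y i.castSucc - y i.succ) := by
      rw [htdef]
      split_ifs with h
      · have hx : x = y i.castSucc := le_antisymm h2 (by rw [h]; exact h1)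
        exact ⟨le_rfl, zero_le_one, by rw [hx]; ring⟩
      · have hlt : y i.succ < y i.castSucc := lt_of_le_of_ne hysc (fun hh => h hh.symm)
        refine ⟨div_nonneg (by linarith) (by linarith),
          (div_le_one (by linarith)).mpr (by linarith), ?_⟩
        have hcc := div_mul_cancel₀ (y i.castSucc - x)
          (show y i.castSucc - y i.succ ≠ 0 by linarith)
        linarith
    obtain ⟨ht0, ht1, hx⟩ := ht
    set f1 : Fin (n + 1) → Fin (n + 1) := Fin.cons i.castSucc (fun j => e (w j)) with hf1
    have hf10 : f1 0 = i.castSucc := rfl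
    have hf1s : ∀ j : Fin n, f1 j.succ = e (w j) := fun j => Fin.cons_succ _ _ j
    have hf1inj : Function.Injective f1 := by
      intro a b hab
      rcases Fin.eq_zero_or_eq_succ a with rfl | ⟨ja, rfl⟩ <;>
        rcases Fin.eq_zero_or_eq_succ b with rfl | ⟨jb, rfl⟩
      · rfl
      · rw [hf10, hf1s] at hab
        exact (he_ne' (w jb) hab.symm).elim
      · rw [hf10, hf1s] at hab
        exact (he_ne' (w ja) hab).elim
      · rw [hf1s, hf1s] at hab
        rw [w.injective (he_inj hab)]
    set σ1 : Equiv.Perm (Fin (n + 1)) :=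
      Equiv.ofBijective f1 (Finite.injective_iff_bijective.mp hf1inj) with hσ1
    set σ2 : Equiv.Perm (Fin (n + 1)) :=
      σ1.trans (Equiv.swap i.castSucc i.succ) with hσ2
    have hσ1a : ∀ c, σ1 c = f1 c := fun c => rfl
    have hσ2a : ∀ c, σ2 c = Equiv.swap i.castSucc i.succ (f1 c) := fun c => rfl
    have hkey : (Fin.cons x (Y' ∘ ⇑w) : Fin (n + 1) → ℝ) =
        (1 - t) • (y ∘ ⇑σ1) + t • (y ∘ ⇑σ2) := by
      funext c
      simp only [Pi.add_apply, Pi.smul_apply, smul_eq_mul, Function.comp_apply, hσ1a, hσ2a]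
      refine Fin.cases ?_ (fun j => ?_) c
      · rw [Fin.cons_zero, hf10, Equiv.swap_apply_left]
        linear_combination hx
      · rw [Fin.cons_succ, hf1s, Function.comp_apply]
        by_cases hwj : w j = i
        · rw [hwj, hei, Equiv.swap_apply_right]
          have hYi : Y' i = y i.castSucc + y i.succ - x := by
            rw [hY'e i, if_pos rfl, hei]
            ring
          rw [hYi]
          linear_combination -hx
        · have hne2 : e (w j) ≠ i.succ := by
            intro hcon
            apply hwj
            have hv := congrArg Fin.val hcon
            rw [heval] at hv
            simp only [Fin.val_succ] at hv
            refine Fin.ext ?_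
            split at hv <;> omega
          rw [Equiv.swap_apply_of_ne_of_ne (he_ne' _) hne2]
          have hYwj : Y' (w j) = y (e (w j)) := by rw [hY'e (w j), if_neg hwj]; ring
          rw [hYwj]
          ring
    rw [hkey]
    exact (permutohedron_convex y) (vertex_mem y σ1) (vertex_mem y σ2)
      (by linarith) ht0 (by ring)

end MixedEulerian
end
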